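/- arXiv:1212.1471 — 5 statements merged into one kernel-verified Lean document; each statement's English description precedes it below -/
import Mathlib

section
/- For any nonnegative weight function φ on transpositions and permutations π, σ ∈ S_n: (1/2)·D_φ(π,σ) ≤ d_φ(π,σ) ≤ 2·D_φ(π,σ), where D_φ(π,σ) = Σ_{i=1}^{n} wt(p*_φ(π⁻¹(i), σ⁻¹(i))) and p*_φ(a,b) is a minimum-weight path from a to b in the complete weighted graph K_φ with edge weights φ((i j)). -/
open Equiv Finset

/-- The adjacent transposition swapping positions `i` and `i+1` (0-indexed);
identity if out of range. -/
def adjSwap (n i : ℕ) : Equiv.Perm (Fin n) :=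
  if h : i + 1 < n then Equiv.swap ⟨i, Nat.lt_of_succ_lt h⟩ ⟨i + 1, h⟩ else 1

/-- `ω` is between `π` and `σ`: on every pair `{a,b}`, `ω` agrees with `π` or with `σ`. -/
def Between {n : ℕ} (π ω σ : Equiv.Perm (Fin n)) : Prop :=
  ∀ a b : Fin n, (π⁻¹ a < π⁻¹ b ↔ ω⁻¹ a < ω⁻¹ b) ∨ (σ⁻¹ a < σ⁻¹ b ↔ ω⁻¹ a < ω⁻¹ b)

/-- Kendall tau distance: minimum number of adjacent transpositions transforming `π` into `σ`. -/
noncomputable def kendall {n : ℕ} (π σ : Equiv.Perm (Fin n)) : ℕ :=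
  sInf {s | ∃ l : List ℕ, (∀ i ∈ l, i + 1 < n) ∧
    σ = π * (l.map (adjSwap n)).prod ∧ l.length = s}

/-- The set of inversions between `π` and `σ` (each unordered pair `{i,j}` of disagreement
is recorded as the ordered pair `(i,j)` with `i` ranked before `j` by `π`). -/
def invSet {n : ℕ} (π σ : Equiv.Perm (Fin n)) : Finset (Fin n × Fin n) :=
  Finset.univ.filter fun p => π⁻¹ p.1 < π⁻¹ p.2 ∧ σ⁻¹ p.2 < σ⁻¹ p.1

/-- Elements `j` on whose relative order with `i` the permutations `π` and `σ` disagree. -/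
def invWith {n : ℕ} (π σ : Equiv.Perm (Fin n)) (i : Fin n) : Finset (Fin n) :=
  Finset.univ.filter fun j => ¬(π⁻¹ i < π⁻¹ j ↔ σ⁻¹ i < σ⁻¹ j)

/-- Weighted Kendall distance for weight function `φ` on adjacent transpositions
(`φ h` is the weight of swapping positions `h, h+1`, 0-indexed). -/
noncomputable def wKendall {n : ℕ} (φ : ℕ → ℝ) (π σ : Equiv.Perm (Fin n)) : ℝ :=
  sInf {w | ∃ l : List ℕ, (∀ i ∈ l, i + 1 < n) ∧
    σ = π * (l.map (adjSwap n)).prod ∧ (l.map φ).sum = w}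

/-- `w(k:l)`: sum of adjacent-transposition weights between positions `min k l` and `max k l - 1`. -/
def wsum (φ : ℕ → ℝ) (k l : ℕ) : ℝ := ∑ h ∈ Finset.Ico (min k l) (max k l), φ h

/-- The generalized (weighted) Spearman footrule `D_φ`. -/
noncomputable def DKendall {n : ℕ} (φ : ℕ → ℝ) (π σ : Equiv.Perm (Fin n)) : ℝ :=
  ∑ i : Fin n, wsum φ ((π⁻¹ i : Fin n) : ℕ) ((σ⁻¹ i : Fin n) : ℕ)

/-- Weighted transposition distance with weight function `φ` on transpositions. -/
noncomputable def wTrans {n : ℕ} (φ : Fin n → Fin n → ℝ) (π σ : Equiv.Perm (Fin n)) : ℝ :=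
  sInf {w | ∃ l : List (Fin n × Fin n), (∀ p ∈ l, p.1 ≠ p.2) ∧
    σ = π * (l.map fun p => Equiv.swap p.1 p.2).prod ∧
    (l.map fun p => φ p.1 p.2).sum = w}

/-- Weight of a path (as a list of vertices) in the complete graph `K_φ`. -/
def pathWt {n : ℕ} (φ : Fin n → Fin n → ℝ) (p : List (Fin n)) : ℝ :=
  ((p.zip p.tail).map fun q => φ q.1 q.2).sum

/-- `p` is a path from `a` to `b` (consecutive vertices distinct). -/
def IsPath {n : ℕ} (p : List (Fin n)) (a b : Fin n) : Prop :=
  p.head? = some a ∧ p.getLast? = some b ∧ p.Chain' (· ≠ ·)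

/-- Minimum weight of a path from `a` to `b` in `K_φ`. -/
noncomputable def minPathWt {n : ℕ} (φ : Fin n → Fin n → ℝ) (a b : Fin n) : ℝ :=
  sInf {w | ∃ p : List (Fin n), IsPath p a b ∧ pathWt φ p = w}

/-- The footrule-type lower/upper bounding function `D_φ` for transposition weights. -/
noncomputable def DTrans {n : ℕ} (φ : Fin n → Fin n → ℝ) (π σ : Equiv.Perm (Fin n)) : ℝ :=
  ∑ i : Fin n, minPathWt φ (π⁻¹ i) (σ⁻¹ i)

variable {n : ℕ} {φ : Fin n → Fin n → ℝ}

lemma pathWt_nil : pathWt φ [] = 0 := rfl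
lemma pathWt_single (a : Fin n) : pathWt φ [a] = 0 := rfl
lemma pathWt_cons_cons (a b : Fin n) (p : List (Fin n)) :
    pathWt φ (a :: b :: p) = φ a b + pathWt φ (b :: p) := rfl

lemma pathWt_nonneg (hφ0 : ∀ a b, 0 ≤ φ a b) (p : List (Fin n)) : 0 ≤ pathWt φ p := by
  apply List.sum_nonneg
  intro x hx
  simp only [List.mem_map] at hx
  obtain ⟨q, _, rfl⟩ := hx
  exact hφ0 _ _

lemma pathWt_snoc (p : List (Fin n)) (c : Fin n) :
    pathWt φ (p ++ [c]) = pathWt φ p + (p.getLast?.elim 0 (fun x => φ x c)) := by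
  induction p with
  | nil => simp [pathWt_nil, pathWt_single]
  | cons a p ih =>
    cases p with
    | nil => simp [pathWt_single, pathWt_cons_cons, pathWt_nil]
    | cons b q =>
      rw [List.cons_append, List.cons_append, pathWt_cons_cons, ← List.cons_append,
        ih, pathWt_cons_cons]
      simp only [List.getLast?_cons_cons]
      ring

lemma pathWt_reverse (hsymm : ∀ a b, φ a b = φ b a) (p : List (Fin n)) :
    pathWt φ p.reverse = pathWt φ p := by
  induction p with
  | nil => rfl
  | cons a p ih =>
    rw [List.reverse_cons, pathWt_snoc, ih, List.getLast?_reverse]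
    cases p with
    | nil => simp [pathWt_single, pathWt_nil]
    | cons b q => simp [pathWt_cons_cons, hsymm a b]; ring

lemma pathSet_nonempty (a b : Fin n) :
    Set.Nonempty {w | ∃ p : List (Fin n), IsPath p a b ∧ pathWt φ p = w} := by
  by_cases h : a = b
  · exact ⟨pathWt φ [a], [a], ⟨rfl, by simp [h], by simp [List.Chain']⟩, rfl⟩
  · exact ⟨pathWt φ [a, b], [a, b], ⟨rfl, by simp, by simp [List.Chain', h]⟩, rfl⟩

lemma pathSet_bddBelow (hφ0 : ∀ a b, 0 ≤ φ a b) (a b : Fin n) :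
    BddBelow {w | ∃ p : List (Fin n), IsPath p a b ∧ pathWt φ p = w} := by
  refine ⟨0, fun w hw => ?_⟩
  obtain ⟨p, _, rfl⟩ := hw
  exact pathWt_nonneg hφ0 p

lemma minPathWt_nonneg (hφ0 : ∀ a b, 0 ≤ φ a b) (a b : Fin n) : 0 ≤ minPathWt φ a b := by
  apply Real.sInf_nonneg
  rintro w ⟨p, _, rfl⟩
  exact pathWt_nonneg hφ0 p

lemma minPathWt_le (hφ0 : ∀ a b, 0 ≤ φ a b) {a b : Fin n} {p : List (Fin n)}
    (hp : IsPath p a b) : minPathWt φ a b ≤ pathWt φ p :=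
  csInf_le (pathSet_bddBelow hφ0 a b) ⟨p, hp, rfl⟩

lemma minPathWt_refl (hφ0 : ∀ a b, 0 ≤ φ a b) (a : Fin n) : minPathWt φ a a = 0 := by
  refine le_antisymm ?_ (minPathWt_nonneg hφ0 a a)
  have := minPathWt_le (φ := φ) hφ0 (p := [a]) (a := a) (b := a) ⟨rfl, by simp, by simp [List.Chain']⟩
  simpa [pathWt_single] using this

lemma minPathWt_le_phi (hφ0 : ∀ a b, 0 ≤ φ a b) {a b : Fin n} (h : a ≠ b) :
    minPathWt φ a b ≤ φ a b := by
  have := minPathWt_le (φ := φ) hφ0 (p := [a, b]) (a := a) (b := b) ⟨rfl, by simp, by simp [List.Chain', h]⟩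
  simpa [pathWt_cons_cons, pathWt_single] using this

lemma isPath_snoc {a b c : Fin n} {p : List (Fin n)} (hp : IsPath p a b) (h : b ≠ c) :
    IsPath (p ++ [c]) a c := by
  obtain ⟨h1, h2, h3⟩ := hp
  cases p with
  | nil => simp at h1
  | cons x q =>
    refine ⟨by simpa using h1, ?_, ?_⟩
    · exact List.getLast?_concat
    · show List.IsChain _ _; rw [List.isChain_append]
      refine ⟨h3, by simp, ?_⟩
      intro u hu v hv
      simp only [List.head?_cons, Option.mem_def, Option.some.injEq] at hv
      subst hv
      have : u = b := by
        have := hu.symm.trans h2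
        exact Option.some.inj this
      subst this
      exact h

lemma minPathWt_edge_extend (hφ0 : ∀ a b, 0 ≤ φ a b) {a b c : Fin n} (h : b ≠ c) :
    minPathWt φ a c ≤ minPathWt φ a b + φ b c := by
  rw [← sub_le_iff_le_add]
  apply le_csInf (pathSet_nonempty a b)
  rintro w ⟨p, hp, rfl⟩
  rw [sub_le_iff_le_add]
  have hle := minPathWt_le (φ := φ) hφ0 (isPath_snoc hp h)
  rw [pathWt_snoc] at hle
  have hlast : p.getLast? = some b := hp.2.1
  rw [hlast] at hle
  simpa using hle

lemma minPathWt_symm (hφ0 : ∀ a b, 0 ≤ φ a b) (hsymm : ∀ a b, φ a b = φ b a) (a b : Fin n) :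
    minPathWt φ a b = minPathWt φ b a := by
  have key : ∀ x y : Fin n, minPathWt φ x y ≤ minPathWt φ y x := by
    intro x y
    apply le_csInf (pathSet_nonempty y x)
    rintro w ⟨p, ⟨h1, h2, h3⟩, rfl⟩
    have hp' : IsPath p.reverse x y := by
      refine ⟨?_, ?_, ?_⟩
      · rw [List.head?_reverse]; exact h2
      · rw [List.getLast?_reverse]; exact h1
      · exact List.isChain_reverse.mpr (List.IsChain.imp (fun a b hab => Ne.symm hab) h3)
    have := minPathWt_le (φ := φ) hφ0 hp'
    rwa [pathWt_reverse hsymm] at this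
  exact le_antisymm (key a b) (key b a)

lemma swap_sim (hφ0 : ∀ a b, 0 ≤ φ a b) :
    ∀ (p : List (Fin n)) (a b : Fin n), a ≠ b → IsPath p a b →
    ∃ l : List (Fin n × Fin n), (∀ q ∈ l, q.1 ≠ q.2) ∧
      ((l.map fun q => Equiv.swap q.1 q.2).prod = Equiv.swap a b) ∧
      (l.map fun q => φ q.1 q.2).sum ≤ 2 * pathWt φ p := by
  intro p
  induction p with
  | nil => intro a b hab hp; simp [IsPath] at hp
  | cons x q ih =>
    intro a b hab hp
    obtain ⟨h1, h2, h3⟩ := hp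
    simp only [List.head?_cons, Option.some.injEq] at h1
    subst h1
    cases q with
    | nil => simp at h2; exact absurd h2 hab
    | cons v rest =>
      have hav : x ≠ v := (List.isChain_cons_cons.mp h3).1
      have h3' : (v :: rest).Chain' (· ≠ ·) := (List.isChain_cons_cons.mp h3).2
      have h2' : (v :: rest).getLast? = some b := by
        rw [List.getLast?_cons_cons] at h2; exact h2
      by_cases hvb : v = b
      · subst hvb
        refine ⟨[(x, v)], by simpa using hab, by simp, ?_⟩
        have hq : 0 ≤ pathWt φ (v :: rest) := pathWt_nonneg hφ0 _
        simp only [List.map_cons, List.map_nil, List.sum_cons, List.sum_nil, add_zero]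
        have := hφ0 x v
        rw [pathWt_cons_cons]
        linarith
      · obtain ⟨l', hl'1, hl'2, hl'3⟩ := ih v b hvb ⟨rfl, h2', h3'⟩
        refine ⟨(x, v) :: l' ++ [(x, v)], ?_, ?_, ?_⟩
        · intro q hq
          rcases List.mem_cons.mp hq with h | hq2
          · rw [h]; exact hav
          · rcases List.mem_append.mp hq2 with h | h
            · exact hl'1 q h
            · rw [List.mem_singleton.mp h]; exact hav
        · simp only [List.map_cons, List.map_append, List.map_singleton, List.prod_cons,
            List.prod_append, List.prod_singleton, hl'2]
          rw [show Equiv.swap x v = Equiv.swap v x from Equiv.swap_comm x v,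
            show Equiv.swap v b = Equiv.swap b v from Equiv.swap_comm v b, ← mul_assoc]
          exact Equiv.swap_mul_swap_mul_swap (Ne.symm hvb) (Ne.symm hab)
        · simp only [List.map_cons, List.map_append, List.map_singleton, List.sum_cons,
            List.sum_append, List.sum_singleton, List.map_nil, List.sum_nil, add_zero]
          rw [pathWt_cons_cons]
          have := hφ0 x v
          linarith

lemma swap_decomp (hφ0 : ∀ a b, 0 ≤ φ a b) {a b : Fin n} (hab : a ≠ b) {ε : ℝ} (hε : 0 < ε) :
    ∃ l : List (Fin n × Fin n), (∀ q ∈ l, q.1 ≠ q.2) ∧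
      ((l.map fun q => Equiv.swap q.1 q.2).prod = Equiv.swap a b) ∧
      (l.map fun q => φ q.1 q.2).sum ≤ 2 * minPathWt φ a b + ε := by
  obtain ⟨w, ⟨p, hp, rfl⟩, hw⟩ :=
    Real.lt_sInf_add_pos (pathSet_nonempty (φ := φ) a b) (show (0:ℝ) < ε / 2 by linarith)
  obtain ⟨l, hl1, hl2, hl3⟩ := swap_sim hφ0 p a b hab hp
  refine ⟨l, hl1, hl2, ?_⟩
  have hmin : minPathWt φ a b = sInf {w | ∃ p : List (Fin n), IsPath p a b ∧ pathWt φ p = w} :=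
    rfl
  rw [hmin]
  linarith

noncomputable def Phi (φ : Fin n → Fin n → ℝ) (μ : Equiv.Perm (Fin n)) : ℝ :=
  ∑ j : Fin n, minPathWt φ j (μ j)

lemma Phi_nonneg (hφ0 : ∀ a b, 0 ≤ φ a b) (μ : Equiv.Perm (Fin n)) : 0 ≤ Phi φ μ :=
  Finset.sum_nonneg fun j _ => minPathWt_nonneg hφ0 j (μ j)

lemma mainQ (hφ0 : ∀ a b, 0 ≤ φ a b) :
    ∀ (k : ℕ) (μ : Equiv.Perm (Fin n)), μ.support.card ≤ k → ∀ y, μ y ≠ y →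
    ∀ ε : ℝ, 0 < ε → ∃ l : List (Fin n × Fin n), (∀ q ∈ l, q.1 ≠ q.2) ∧
      ((l.map fun q => Equiv.swap q.1 q.2).prod = μ) ∧
      (l.map fun q => φ q.1 q.2).sum ≤ 2 * (Phi φ μ - minPathWt φ y (μ y)) + ε := by
  intro k
  induction k with
  | zero =>
    intro μ hc y hy ε hε
    exact absurd (Finset.card_pos.mpr ⟨y, Equiv.Perm.mem_support.mpr hy⟩) (by omega)
  | succ k ih =>
    have ihR : ∀ μ : Equiv.Perm (Fin n), μ.support.card ≤ k → ∀ ε : ℝ, 0 < ε →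
        ∃ l : List (Fin n × Fin n), (∀ q ∈ l, q.1 ≠ q.2) ∧
          ((l.map fun q => Equiv.swap q.1 q.2).prod = μ) ∧
          (l.map fun q => φ q.1 q.2).sum ≤ 2 * Phi φ μ + ε := by
      intro μ hcard ε hε
      by_cases h1 : μ = 1
      · refine ⟨[], by simp, by simp [h1], ?_⟩
        have := Phi_nonneg hφ0 μ
        simp only [List.map_nil, List.sum_nil]
        linarith
      · obtain ⟨y, hy⟩ : ∃ y, μ y ≠ y := by
          by_contra h
          push_neg at h
          exact h1 (Equiv.ext h)
        obtain ⟨l, hl1, hl2, hl3⟩ := ih μ hcard y hy ε hε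
        exact ⟨l, hl1, hl2, by
          have := minPathWt_nonneg hφ0 y (μ y); linarith⟩
    intro μ hc y hy ε hε
    have hay : μ y ≠ y := hy
    set a := μ y with ha
    set c := μ a with hc2
    have hya : y ≠ a := Ne.symm hay
    have hac : a ≠ c := by
      intro h
      exact hya (μ.injective (show μ y = μ a from by rw [← ha, ← hc2, ← h]))
    set s := Equiv.swap a c with hs
    set μ' := s * μ with hμ'
    have hμ'y : μ' y = c := by
      rw [hμ', Equiv.Perm.mul_apply, ← ha, hs, Equiv.swap_apply_left]
    have hμ'a : μ' a = a := by
      rw [hμ', Equiv.Perm.mul_apply, ← hc2, hs, Equiv.swap_apply_right]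
    have hμfix : ∀ j : Fin n, j ≠ y → j ≠ a → μ' j = μ j := by
      intro j hjy hja
      have h1 : μ j ≠ a := fun h => hjy (μ.injective (h.trans ha))
      have h2 : μ j ≠ c := fun h => hja (μ.injective (h.trans hc2))
      rw [hμ', Equiv.Perm.mul_apply, hs, Equiv.swap_apply_of_ne_of_ne h1 h2]
    have hsub : μ'.support ⊆ μ.support.erase a := by
      intro j hj
      rw [Finset.mem_erase]
      have hj' := Equiv.Perm.mem_support.mp hj
      constructor
      · intro h; rw [h] at hj'; exact hj' hμ'a
      · rw [Equiv.Perm.mem_support]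
        intro hfix
        have hjy : j ≠ y := by
          intro h; rw [h] at hfix; exact hay hfix
        have hja : j ≠ a := by
          intro h; rw [h] at hj'; exact hj' hμ'a
        exact hj' ((hμfix j hjy hja).trans hfix)
    have hcard : μ'.support.card ≤ k := by
      have hmem : a ∈ μ.support := Equiv.Perm.mem_support.mpr (by rw [← hc2]; exact hac.symm)
      have h1 := Finset.card_le_card hsub
      rw [Finset.card_erase_of_mem hmem] at h1
      omega
    have hsumdiff : Phi φ μ - Phi φ μ' =
        (minPathWt φ y a - minPathWt φ y c) + minPathWt φ a c := by
      rw [Phi, Phi, ← Finset.sum_sub_distrib]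
      rw [show (∑ j : Fin n, (minPathWt φ j (μ j) - minPathWt φ j (μ' j))) =
          ∑ j ∈ ({y, a} : Finset (Fin n)), (minPathWt φ j (μ j) - minPathWt φ j (μ' j)) from
        (Finset.sum_subset (Finset.subset_univ _) (fun j _ hj => by
          simp only [Finset.mem_insert, Finset.mem_singleton, not_or] at hj
          rw [hμfix j hj.1 hj.2, sub_self])).symm]
      rw [Finset.sum_pair hya, hμ'y, hμ'a, ← ha, ← hc2, minPathWt_refl hφ0 a]
      ring
    have hε2 : (0:ℝ) < ε / 2 := by linarith
    obtain ⟨ls, hs1, hs2, hs3⟩ := swap_decomp hφ0 hac hε2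
    by_cases hcy : c = y
    · obtain ⟨l', hl1, hl2, hl3⟩ := ihR μ' hcard (ε/2) hε2
      refine ⟨ls ++ l', ?_, ?_, ?_⟩
      · intro q hq
        rcases List.mem_append.mp hq with h | h
        · exact hs1 q h
        · exact hl1 q h
      · rw [List.map_append, List.prod_append, hs2, hl2, hμ', ← mul_assoc, hs,
          Equiv.swap_mul_self, one_mul]
      · rw [List.map_append, List.sum_append]
        have hwyc : minPathWt φ y c = 0 := by rw [hcy]; exact minPathWt_refl hφ0 y
        linarith
    · have hy' : μ' y ≠ y := by rw [hμ'y]; exact hcy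
      obtain ⟨l', hl1, hl2, hl3⟩ := ih μ' hcard y hy' (ε/2) hε2
      rw [hμ'y] at hl3
      refine ⟨ls ++ l', ?_, ?_, ?_⟩
      · intro q hq
        rcases List.mem_append.mp hq with h | h
        · exact hs1 q h
        · exact hl1 q h
      · rw [List.map_append, List.prod_append, hs2, hl2, hμ', ← mul_assoc, hs,
          Equiv.swap_mul_self, one_mul]
      · rw [List.map_append, List.sum_append]
        linarith

lemma lemR (hφ0 : ∀ a b, 0 ≤ φ a b) (μ : Equiv.Perm (Fin n)) {ε : ℝ} (hε : 0 < ε) :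
    ∃ l : List (Fin n × Fin n), (∀ q ∈ l, q.1 ≠ q.2) ∧
      ((l.map fun q => Equiv.swap q.1 q.2).prod = μ) ∧
      (l.map fun q => φ q.1 q.2).sum ≤ 2 * Phi φ μ + ε := by
  by_cases h1 : μ = 1
  · refine ⟨[], by simp, by simp [h1], ?_⟩
    have := Phi_nonneg hφ0 μ
    simp only [List.map_nil, List.sum_nil]
    linarith
  · obtain ⟨y, hy⟩ : ∃ y, μ y ≠ y := by
      by_contra h
      push_neg at h
      exact h1 (Equiv.ext h)
    obtain ⟨l, hl1, hl2, hl3⟩ := mainQ hφ0 μ.support.card μ le_rfl y hy ε hε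
    exact ⟨l, hl1, hl2, by have := minPathWt_nonneg hφ0 y (μ y); linarith⟩

lemma lowerPhi (hφ0 : ∀ a b, 0 ≤ φ a b) (hsymm : ∀ a b, φ a b = φ b a) :
    ∀ l : List (Fin n × Fin n), (∀ q ∈ l, q.1 ≠ q.2) →
      Phi φ ((l.map fun q => Equiv.swap q.1 q.2).prod) ≤
        2 * (l.map fun q => φ q.1 q.2).sum := by
  intro l
  induction l with
  | nil => intro _; simp [Phi, minPathWt_refl hφ0]
  | cons q l ihl =>
    intro hvalid
    have hq : q.1 ≠ q.2 := hvalid q List.mem_cons_self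
    have htail : ∀ p ∈ l, p.1 ≠ p.2 := fun p hp => hvalid p (List.mem_cons_of_mem q hp)
    have ih := ihl htail
    set μ := (l.map fun q => Equiv.swap q.1 q.2).prod with hμdef
    have hterm : ∀ j : Fin n, minPathWt φ j (Equiv.swap q.1 q.2 (μ j)) ≤
        minPathWt φ j (μ j) + (if μ j = q.1 ∨ μ j = q.2 then φ q.1 q.2 else 0) := by
      intro j
      by_cases h1 : μ j = q.1
      · rw [h1, Equiv.swap_apply_left, if_pos (Or.inl rfl)]
        exact minPathWt_edge_extend hφ0 hq
      · by_cases h2 : μ j = q.2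
        · rw [h2, Equiv.swap_apply_right, if_pos (Or.inr rfl), hsymm q.1 q.2]
          exact minPathWt_edge_extend hφ0 (Ne.symm hq)
        · rw [Equiv.swap_apply_of_ne_of_ne h1 h2, if_neg (by tauto)]
          simp
    have hindsum : (∑ j : Fin n, (if μ j = q.1 ∨ μ j = q.2 then φ q.1 q.2 else 0))
        = 2 * φ q.1 q.2 := by
      rw [Equiv.sum_comp μ (fun x => if x = q.1 ∨ x = q.2 then φ q.1 q.2 else 0)]
      have hsplit : ∀ x : Fin n, (if x = q.1 ∨ x = q.2 then φ q.1 q.2 else 0) =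
          (if x = q.1 then φ q.1 q.2 else 0) + (if x = q.2 then φ q.1 q.2 else 0) := by
        intro x
        by_cases h1 : x = q.1
        · rw [if_pos (Or.inl h1), if_pos h1, if_neg (by rw [h1]; exact hq), add_zero]
        · by_cases h2 : x = q.2
          · rw [if_pos (Or.inr h2), if_neg h1, if_pos h2, zero_add]
          · rw [if_neg (by tauto), if_neg h1, if_neg h2, add_zero]
      rw [Finset.sum_congr rfl (fun x _ => hsplit x), Finset.sum_add_distrib,
        Finset.sum_ite_eq' Finset.univ q.1 (fun _ => φ q.1 q.2),
        Finset.sum_ite_eq' Finset.univ q.2 (fun _ => φ q.1 q.2),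
        if_pos (Finset.mem_univ _), if_pos (Finset.mem_univ _)]
      ring
    have hPhile : Phi φ (Equiv.swap q.1 q.2 * μ) ≤ Phi φ μ + 2 * φ q.1 q.2 := by
      rw [Phi, ← hindsum, Phi, ← Finset.sum_add_distrib]
      exact Finset.sum_le_sum fun j _ => hterm j
    simp only [List.map_cons, List.prod_cons, List.sum_cons, ← hμdef]
    calc Phi φ (Equiv.swap q.1 q.2 * μ) ≤ Phi φ μ + 2 * φ q.1 q.2 := hPhile
      _ ≤ 2 * (φ q.1 q.2 + (l.map fun q => φ q.1 q.2).sum) := by linarith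

lemma DTrans_eq (hφ0 : ∀ a b, 0 ≤ φ a b) (hsymm : ∀ a b, φ a b = φ b a)
    (π σ : Equiv.Perm (Fin n)) : DTrans φ π σ = Phi φ (π⁻¹ * σ) := by
  rw [DTrans, Phi, ← Equiv.sum_comp σ (fun i => minPathWt φ (π⁻¹ i) (σ⁻¹ i))]
  apply Finset.sum_congr rfl
  intro j _
  rw [show σ⁻¹ (σ j) = j from σ.symm_apply_apply j,
    minPathWt_symm hφ0 hsymm]
  rfl


theorem stmt14 (n : ℕ) (φ : Fin n → Fin n → ℝ)
    (hφ0 : ∀ a b, 0 ≤ φ a b) (hsymm : ∀ a b, φ a b = φ b a)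
    (π σ : Equiv.Perm (Fin n)) :
    (1 / 2) * DTrans φ π σ ≤ wTrans φ π σ ∧ wTrans φ π σ ≤ 2 * DTrans φ π σ := by
  have hD : DTrans φ π σ = Phi φ (π⁻¹ * σ) := DTrans_eq hφ0 hsymm π σ
  have hwT : wTrans φ π σ = sInf {w | ∃ l : List (Fin n × Fin n), (∀ p ∈ l, p.1 ≠ p.2) ∧
      σ = π * (l.map fun p => Equiv.swap p.1 p.2).prod ∧
      (l.map fun p => φ p.1 p.2).sum = w} := rfl
  set S := {w | ∃ l : List (Fin n × Fin n), (∀ p ∈ l, p.1 ≠ p.2) ∧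
      σ = π * (l.map fun p => Equiv.swap p.1 p.2).prod ∧
      (l.map fun p => φ p.1 p.2).sum = w} with hS
  have hNE : S.Nonempty := by
    obtain ⟨l, hl1, hl2, _⟩ := lemR hφ0 (π⁻¹ * σ) one_pos
    exact ⟨(l.map fun p => φ p.1 p.2).sum, l, hl1, by rw [hl2, mul_inv_cancel_left], rfl⟩
  have hBdd : BddBelow S := by
    refine ⟨0, fun w hw => ?_⟩
    obtain ⟨l, _, _, rfl⟩ := hw
    apply List.sum_nonneg
    intro x hx
    obtain ⟨p, _, rfl⟩ := List.mem_map.mp hx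
    exact hφ0 _ _
  constructor
  · rw [hwT]
    apply le_csInf hNE
    rintro w ⟨l, hl1, hl2, rfl⟩
    have hprod : (l.map fun p => Equiv.swap p.1 p.2).prod = π⁻¹ * σ := by
      rw [hl2, inv_mul_cancel_left]
    have := lowerPhi hφ0 hsymm l hl1
    rw [hprod] at this
    rw [hD]
    linarith
  · rw [hD]
    apply le_of_forall_pos_le_add
    intro ε hε
    obtain ⟨l, hl1, hl2, hl3⟩ := lemR hφ0 (π⁻¹ * σ) hε
    have hmem : (l.map fun p => φ p.1 p.2).sum ∈ S :=
      ⟨l, hl1, by rw [hl2, mul_inv_cancel_left], rfl⟩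
    calc wTrans φ π σ ≤ (l.map fun p => φ p.1 p.2).sum := by
          exact csInf_le hBdd hmem
      _ ≤ 2 * Phi φ (π⁻¹ * σ) + ε := hl3
end

section
/- If φ is a metric weight function on transpositions, then for all π, σ ∈ S_n, d_φ(π,σ) ≤ D_φ(π,σ), where D_φ(π,σ) = Σ_i wt(p*_φ(π⁻¹(i), σ⁻¹(i))). -/
open Equiv Finset

noncomputable def Bsum {n : ℕ} (φ : Fin n → Fin n → ℝ) (ρ : Equiv.Perm (Fin n)) : ℝ :=
  ∑ x : Fin n, if x = ρ x then 0 else φ x (ρ x)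

lemma split_sum {n : ℕ} {u v : Fin n} (huv : u ≠ v) (f : Fin n → ℝ) :
    ∑ x : Fin n, f x = f u + f v + ∑ x ∈ univ \ {u, v}, f x := by
  rw [← Finset.sum_sdiff (Finset.subset_univ {u, v}), Finset.sum_pair huv]
  ring

lemma slack_lemma {n : ℕ} (φ : Fin n → Fin n → ℝ) (hφ0 : ∀ a b, 0 ≤ φ a b) :
    ∀ N (ρ : Equiv.Perm (Fin n)), ρ.support.card ≤ N → ∀ a ∈ ρ.support,
      ∃ l : List (Fin n × Fin n), (∀ p ∈ l, p.1 ≠ p.2) ∧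
        (l.map fun p => Equiv.swap p.1 p.2).prod = ρ ∧
        (l.map fun p => φ p.1 p.2).sum ≤ Bsum φ ρ - φ (ρ⁻¹ a) a := by
  intro N
  induction N with
  | zero =>
    intro ρ h a ha
    rw [Nat.le_zero, Finset.card_eq_zero] at h
    rw [h] at ha
    exact absurd ha (Finset.notMem_empty a)
  | succ N ih =>
    have full : ∀ ρ : Equiv.Perm (Fin n), ρ.support.card ≤ N →
        ∃ l : List (Fin n × Fin n), (∀ p ∈ l, p.1 ≠ p.2) ∧
          (l.map fun p => Equiv.swap p.1 p.2).prod = ρ ∧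
          (l.map fun p => φ p.1 p.2).sum ≤ Bsum φ ρ := by
      intro ρ h
      by_cases h1 : ρ = 1
      · refine ⟨[], by simp, by simp [h1], ?_⟩
        simp [Bsum, h1]
      · obtain ⟨a, ha⟩ := Finset.nonempty_of_ne_empty (fun h => h1 (Equiv.Perm.support_eq_empty_iff.mp h))
        obtain ⟨l, hl1, hl2, hl3⟩ := ih ρ h a ha
        exact ⟨l, hl1, hl2, hl3.trans (sub_le_self _ (hφ0 _ _))⟩
    intro ρ hcard a ha
    have hρa : ρ a ≠ a := Equiv.Perm.mem_support.mp ha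
    set c := ρ a with hc
    set b := ρ⁻¹ a with hb
    have hρb : ρ b = a := by rw [hb]; simp
    have hac : a ≠ c := fun h => hρa h.symm
    have hba : b ≠ a := by
      intro h; rw [h] at hρb; exact hρa hρb
    set ρ' := Equiv.swap a c * ρ with hρ'
    have hρ'app : ∀ x, ρ' x = Equiv.swap a c (ρ x) := fun x => rfl
    have hρ'a : ρ' a = a := by rw [hρ'app, ← hc, Equiv.swap_apply_right]
    have hρcc : ρ c ≠ c := by
      intro h
      exact hac (ρ.injective (by rw [hρb, ← hc] at *; rw [← hc] at h ⊢; exact (hc ▸ h).symm ▸ rfl))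
    have hprod : Equiv.swap a c * ρ' = ρ := by
      rw [hρ', ← mul_assoc, Equiv.swap_mul_self, one_mul]
    have hsub : ρ'.support ⊆ ρ.support.erase a := by
      intro x hx
      rw [Finset.mem_erase]
      have hx' : ρ' x ≠ x := Equiv.Perm.mem_support.mp hx
      constructor
      · rintro rfl; exact hx' hρ'a
      · rw [Equiv.Perm.mem_support]
        intro hfix
        rw [hρ'app, hfix] at hx'
        rcases Equiv.swap_apply_ne_self_iff.mp hx' with ⟨-, h2⟩
        rcases h2 with rfl | rfl
        · exact hρa hfix
        · exact hρcc hfix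
    have hcard' : ρ'.support.card ≤ N := by
      have := Finset.card_le_card hsub
      rw [Finset.card_erase_of_mem ha] at this
      omega
    by_cases hbc : b = c
    · -- 2-cycle case
      have hρc : ρ c = a := by rw [← hbc]; exact hρb
      have hρ'c : ρ' c = c := by rw [hρ'app, hρc, Equiv.swap_apply_left]
      obtain ⟨l', hl1, hl2, hl3⟩ := full ρ' hcard'
      refine ⟨(a, c) :: l', ?_, ?_, ?_⟩
      · intro p hp
        rcases List.mem_cons.mp hp with rfl | hp
        · exact hac
        · exact hl1 p hp
      · simp only [List.map_cons, List.prod_cons, hl2, hprod]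
      · have hB : Bsum φ ρ = φ a c + φ c a + ∑ x ∈ univ \ {a, c},
            (if x = ρ x then 0 else φ x (ρ x)) := by
          rw [Bsum, split_sum hac]
          congr 1
          congr 1
          · rw [if_neg hac, ← hc]
          · rw [hρc, if_neg (Ne.symm hac)]
        have hB' : Bsum φ ρ' = ∑ x ∈ univ \ {a, c},
            (if x = ρ x then 0 else φ x (ρ x)) := by
          rw [Bsum, split_sum hac]
          rw [hρ'a, if_pos rfl, hρ'c, if_pos rfl]
          rw [zero_add, zero_add]
          apply Finset.sum_congr rfl
          intro x hx
          rw [Finset.mem_sdiff, Finset.mem_insert, Finset.mem_singleton] at hx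
          push_neg at hx
          obtain ⟨-, hxa, hxc⟩ := hx
          have h1 : ρ x ≠ a := fun h => hxc (by rw [← hbc]; exact ρ.injective (h.trans hρb.symm) )
          have h2 : ρ x ≠ c := fun h => hxa (ρ.injective (h.trans hc))
          rw [hρ'app, Equiv.swap_apply_of_ne_of_ne h1 h2]
        simp only [List.map_cons, List.sum_cons]
        rw [hB, hbc]
        rw [hB'] at hl3
        linarith
    · -- cycle length ≥ 3
      have hρ'b : ρ' b = c := by rw [hρ'app, hρb, Equiv.swap_apply_left]
      have hρca : ρ c ≠ a := fun h => hbc (by rw [hb, ← h]; simp)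
      have hρ'c : ρ' c = ρ c := by
        rw [hρ'app, Equiv.swap_apply_of_ne_of_ne hρca hρcc]
      have hcmem : c ∈ ρ'.support := Equiv.Perm.mem_support.mpr (by rw [hρ'c]; exact hρcc)
      obtain ⟨l', hl1, hl2, hl3⟩ := ih ρ' hcard' c hcmem
      have hinv : ρ'⁻¹ c = b := by rw [← hρ'b]; simp
      rw [hinv] at hl3
      refine ⟨(a, c) :: l', ?_, ?_, ?_⟩
      · intro p hp
        rcases List.mem_cons.mp hp with rfl | hp
        · exact hac
        · exact hl1 p hp
      · simp only [List.map_cons, List.prod_cons, hl2, hprod]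
      · have hB : Bsum φ ρ = φ a c + φ b a + ∑ x ∈ univ \ {a, b},
            (if x = ρ x then 0 else φ x (ρ x)) := by
          rw [Bsum, split_sum (Ne.symm hba)]
          congr 1
          congr 1
          · rw [if_neg hac, ← hc]
          · rw [hρb, if_neg hba]
        have hB' : Bsum φ ρ' = φ b c + ∑ x ∈ univ \ {a, b},
            (if x = ρ x then 0 else φ x (ρ x)) := by
          rw [Bsum, split_sum (Ne.symm hba)]
          rw [hρ'a, if_pos rfl, hρ'b, if_neg hbc, zero_add]
          congr 1
          apply Finset.sum_congr rfl
          intro x hx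
          rw [Finset.mem_sdiff, Finset.mem_insert, Finset.mem_singleton] at hx
          push_neg at hx
          obtain ⟨-, hxa, hxb⟩ := hx
          have h1 : ρ x ≠ a := fun h => hxb (ρ.injective (h.trans hρb.symm))
          have h2 : ρ x ≠ c := fun h => hxa (ρ.injective (h.trans hc))
          rw [hρ'app, Equiv.swap_apply_of_ne_of_ne h1 h2]
        simp only [List.map_cons, List.sum_cons]
        rw [hB]
        rw [hB'] at hl3
        linarith

lemma exists_decomp {n : ℕ} (φ : Fin n → Fin n → ℝ) (hφ0 : ∀ a b, 0 ≤ φ a b)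
    (ρ : Equiv.Perm (Fin n)) :
    ∃ l : List (Fin n × Fin n), (∀ p ∈ l, p.1 ≠ p.2) ∧
      (l.map fun p => Equiv.swap p.1 p.2).prod = ρ ∧
      (l.map fun p => φ p.1 p.2).sum ≤ Bsum φ ρ := by
  by_cases h1 : ρ = 1
  · exact ⟨[], by simp, by simp [h1], by simp [Bsum, h1]⟩
  · obtain ⟨a, ha⟩ := Finset.nonempty_of_ne_empty
      (fun h => h1 (Equiv.Perm.support_eq_empty_iff.mp h))
    obtain ⟨l, hl1, hl2, hl3⟩ := slack_lemma φ hφ0 ρ.support.card ρ le_rfl a ha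
    exact ⟨l, hl1, hl2, hl3.trans (sub_le_self _ (hφ0 _ _))⟩

lemma pathWt_ge {n : ℕ} (φ : Fin n → Fin n → ℝ) (hφ0 : ∀ a b, 0 ≤ φ a b)
    (hmetric : ∀ a b c : Fin n, a ≠ b → b ≠ c → a ≠ c → φ a b ≤ φ a c + φ c b) :
    ∀ (p : List (Fin n)) (a b : Fin n), IsPath p a b →
      (if a = b then 0 else φ a b) ≤ pathWt φ p := by
  intro p
  induction p with
  | nil => intro a b h; exact absurd h.1 (by simp)
  | cons x rest ih =>
    intro a b ⟨h1, h2, h3⟩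
    have hxa : x = a := by simpa using h1
    subst hxa
    match rest with
    | [] =>
      have : x = b := by simpa using h2
      subst this
      simp [pathWt]
    | y :: t =>
      have h2' : (y :: t).getLast? = some b := by
        rw [List.getLast?_cons_cons] at h2; exact h2
      have hxy : x ≠ y := (List.isChain_cons_cons.mp h3).1
      have h3' : (y :: t).Chain' (· ≠ ·) := (List.isChain_cons_cons.mp h3).2
      have ihy := ih y b ⟨rfl, h2', h3'⟩
      have hsum : pathWt φ (x :: y :: t) = φ x y + pathWt φ (y :: t) := by
        simp [pathWt]
      rw [hsum]
      have hnn : 0 ≤ pathWt φ (y :: t) := by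
        apply List.sum_nonneg
        intro z hz
        obtain ⟨q, -, rfl⟩ := List.mem_map.mp hz
        exact hφ0 _ _
      by_cases hxb : x = b
      · rw [if_pos hxb]
        have := hφ0 x y; linarith
      · rw [if_neg hxb]
        by_cases hyb : y = b
        · subst hyb
          rw [if_pos rfl] at ihy
          linarith
        · rw [if_neg hyb] at ihy
          have := hmetric x b y hxb (Ne.symm hyb) hxy
          linarith

lemma minPathWt_ge {n : ℕ} (φ : Fin n → Fin n → ℝ) (hφ0 : ∀ a b, 0 ≤ φ a b)
    (hmetric : ∀ a b c : Fin n, a ≠ b → b ≠ c → a ≠ c → φ a b ≤ φ a c + φ c b)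
    (a b : Fin n) :
    (if a = b then 0 else φ a b) ≤ minPathWt φ a b := by
  apply le_csInf
  · by_cases hab : a = b
    · subst hab
      exact ⟨pathWt φ [a], ⟨[a], ⟨rfl, rfl, List.isChain_singleton _⟩, rfl⟩⟩
    · exact ⟨pathWt φ [a, b], ⟨[a, b], ⟨rfl, rfl, List.isChain_pair.mpr hab⟩, rfl⟩⟩
  · rintro w ⟨p, hp, rfl⟩
    exact pathWt_ge φ hφ0 hmetric p a b hp

theorem stmt15 (n : ℕ) (φ : Fin n → Fin n → ℝ)
    (hφ0 : ∀ a b, 0 ≤ φ a b) (hsymm : ∀ a b, φ a b = φ b a)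
    (hmetric : ∀ a b c : Fin n, a ≠ b → b ≠ c → a ≠ c → φ a b ≤ φ a c + φ c b)
    (π σ : Equiv.Perm (Fin n)) :
    wTrans φ π σ ≤ DTrans φ π σ := by
  obtain ⟨l, hl1, hl2, hl3⟩ := exists_decomp φ hφ0 (π⁻¹ * σ)
  have hbdd : BddBelow {w | ∃ l : List (Fin n × Fin n), (∀ p ∈ l, p.1 ≠ p.2) ∧
      σ = π * (l.map fun p => Equiv.swap p.1 p.2).prod ∧
      (l.map fun p => φ p.1 p.2).sum = w} := by
    refine ⟨0, ?_⟩
    rintro w ⟨l', -, -, rfl⟩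
    apply List.sum_nonneg
    intro z hz
    obtain ⟨q, -, rfl⟩ := List.mem_map.mp hz
    exact hφ0 _ _
  have h1 : wTrans φ π σ ≤ (l.map fun p => φ p.1 p.2).sum := by
    apply csInf_le hbdd
    exact ⟨l, hl1, by rw [hl2, mul_inv_cancel_left], rfl⟩
  have hB : Bsum φ (π⁻¹ * σ) = ∑ i : Fin n,
      (if (σ⁻¹ i : Fin n) = π⁻¹ i then 0 else φ (σ⁻¹ i) (π⁻¹ i)) := by
    have hcomp := Equiv.sum_comp σ⁻¹
      (fun x : Fin n => if x = π⁻¹ (σ x) then 0 else φ x (π⁻¹ (σ x)))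
    rw [show Bsum φ (π⁻¹ * σ) =
      ∑ x : Fin n, (if x = π⁻¹ (σ x) then 0 else φ x (π⁻¹ (σ x))) from rfl, ← hcomp]
    apply Finset.sum_congr rfl
    intro i _
    simp
  have h2 : Bsum φ (π⁻¹ * σ) ≤ DTrans φ π σ := by
    rw [hB, DTrans]
    apply Finset.sum_le_sum
    intro i _
    have := minPathWt_ge φ hφ0 hmetric (π⁻¹ i) (σ⁻¹ i)
    have heq : (if (σ⁻¹ i : Fin n) = π⁻¹ i then 0 else φ (σ⁻¹ i) (π⁻¹ i))
        = (if (π⁻¹ i : Fin n) = σ⁻¹ i then 0 else φ (π⁻¹ i) (σ⁻¹ i)) := by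
      rw [hsymm]
      exact if_congr eq_comm rfl rfl
    rw [heq]
    exact this
  linarith
end

section
/- For a metric-path weight function φ (arising from a weighted path graph on [n] where φ((a b)) is the sum of edge weights on the path between a and b), the weighted transposition distance satisfies exactly d_φ(π,σ) = (1/2)·D_φ(π,σ) for all π, σ ∈ S_n, where D_φ(π,σ) = Σ_i φ((π⁻¹(i), σ⁻¹(i))) (terms with π⁻¹(i) = σ⁻¹(i) counted as 0). -/
open Equiv Finset

noncomputable def Wp (w : ℕ → ℝ) (m : ℕ) : ℝ := ∑ h ∈ Finset.range m, w h

lemma wsum_eq_sub (w : ℕ → ℝ) {k l : ℕ} (h : k ≤ l) : wsum w k l = Wp w l - Wp w k := by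
  rw [wsum, min_eq_left h, max_eq_right h, Wp, Wp, Finset.sum_Ico_eq_sub _ h]

lemma wsum_comm (w : ℕ → ℝ) (k l : ℕ) : wsum w k l = wsum w l k := by
  rw [wsum, wsum, min_comm, max_comm]

lemma wsum_self (w : ℕ → ℝ) (k : ℕ) : wsum w k k = 0 := by simp [wsum]

lemma Wp_mono (w : ℕ → ℝ) (hw : ∀ i, 0 ≤ w i) {k l : ℕ} (h : k ≤ l) : Wp w k ≤ Wp w l := by
  have := wsum_eq_sub w h
  have h2 : 0 ≤ wsum w k l := Finset.sum_nonneg fun i _ => hw i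
  linarith

lemma wsum_abs (w : ℕ → ℝ) (hw : ∀ i, 0 ≤ w i) (k l : ℕ) :
    wsum w k l = |Wp w l - Wp w k| := by
  rcases le_total k l with h | h
  · rw [wsum_eq_sub w h, abs_of_nonneg (by linarith [Wp_mono w hw h])]
  · rw [wsum_comm, wsum_eq_sub w h, abs_of_nonpos (by linarith [Wp_mono w hw h])]
    ring

lemma wsum_triangle (w : ℕ → ℝ) (hw : ∀ i, 0 ≤ w i) (x y z : ℕ) :
    wsum w x y ≤ wsum w x z + wsum w z y := by
  rw [wsum_abs w hw, wsum_abs w hw, wsum_abs w hw]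
  calc |Wp w y - Wp w x| = |(Wp w z - Wp w x) + (Wp w y - Wp w z)| := by ring_nf
    _ ≤ |Wp w z - Wp w x| + |Wp w y - Wp w z| := abs_add_le _ _

lemma sum_split {n : ℕ} {M : Type*} [AddCommMonoid M] {a b : Fin n} (hab : a ≠ b)
    (F : Fin n → M) :
    ∑ p : Fin n, F p = (∑ p ∈ univ \ {a, b}, F p) + (F a + F b) := by
  rw [← Finset.sum_pair hab, Finset.sum_sdiff (Finset.subset_univ _)]

lemma exists_good_pair {n : ℕ} (g : Equiv.Perm (Fin n)) (hg : g ≠ 1) :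
    ∃ a b : Fin n, (a : ℕ) < (b : ℕ) ∧ (b : ℕ) ≤ ((g a : Fin n) : ℕ) ∧
      ((g b : Fin n) : ℕ) ≤ (a : ℕ) := by
  have hne : ∃ p : Fin n, g p ≠ p := by
    by_contra h; push_neg at h; exact hg (Equiv.ext h)
  -- the set of p with p < g p is nonempty
  have hAne : (Finset.univ.filter fun p : Fin n => (p : ℕ) < ((g p : Fin n) : ℕ)).Nonempty := by
    obtain ⟨p, hp⟩ := hne
    have hNfne : (Finset.univ.filter fun q : Fin n => g q ≠ q).Nonempty := ⟨p, by simp [hp]⟩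
    set p0 := (Finset.univ.filter fun q : Fin n => g q ≠ q).min' hNfne with hp0def
    have h1 : g p0 ≠ p0 := by
      have := Finset.min'_mem _ hNfne
      simpa using this
    have hmin : ∀ x ∈ (Finset.univ.filter fun q : Fin n => g q ≠ q), p0 ≤ x :=
      fun x hx => Finset.min'_le _ x hx
    have h2 : (p0 : ℕ) < ((g p0 : Fin n) : ℕ) := by
      rcases Nat.lt_or_ge ((g p0 : Fin n) : ℕ) (p0 : ℕ) with h | h
      · exfalso
        set q := g p0 with hq
        have hqlt : q < p0 := h
        have hqfix : g q = q := by
          by_contra hq2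
          have := hmin q (by simp [hq2])
          exact absurd hqlt (not_lt.mpr this)
        have : q = p0 := g.injective (by rw [hqfix, hq])
        omega
      · rcases Nat.lt_or_ge (p0 : ℕ) ((g p0 : Fin n) : ℕ) with h' | h'
        · exact h'
        · exact absurd (Fin.ext (by omega)) h1
    exact ⟨p0, Finset.mem_filter.mpr ⟨Finset.mem_univ _, h2⟩⟩
  set a := (Finset.univ.filter fun p : Fin n => (p : ℕ) < ((g p : Fin n) : ℕ)).max' hAne with hadef
  have ha : (a : ℕ) < ((g a : Fin n) : ℕ) := by
    have hmem : a ∈ (Finset.univ.filter fun p : Fin n => (p : ℕ) < ((g p : Fin n) : ℕ)) :=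
      Finset.max'_mem _ hAne
    exact (Finset.mem_filter.mp hmem).2
  have hmax : ∀ q : Fin n, (a : ℕ) < (q : ℕ) → ((g q : Fin n) : ℕ) ≤ (q : ℕ) := by
    intro q hq
    by_contra h
    push_neg at h
    have hqA : q ∈ (Finset.univ.filter fun p : Fin n => (p : ℕ) < ((g p : Fin n) : ℕ)) :=
      Finset.mem_filter.mpr ⟨Finset.mem_univ _, h⟩
    have := Finset.le_max' _ q hqA
    exact absurd hq (not_lt.mpr this)
  -- there exists q > a with g q ≤ a
  have hBex : ∃ q : Fin n, (a : ℕ) < (q : ℕ) ∧ ((g q : Fin n) : ℕ) ≤ (a : ℕ) := by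
    set S := Finset.univ.filter fun q : Fin n => ((g q : Fin n) : ℕ) ≤ (a : ℕ) with hS
    set T := Finset.univ.filter fun q : Fin n => (q : ℕ) ≤ (a : ℕ) with hT
    have himg : T.image ⇑g⁻¹ = S := by
      ext x
      simp only [hS, hT, Finset.mem_image, Finset.mem_filter, Finset.mem_univ, true_and]
      constructor
      · rintro ⟨y, hy, rfl⟩
        simpa using hy
      · intro hx
        exact ⟨g x, by simpa using hx, by simp⟩
    have hcard : S.card = T.card := by
      rw [← himg, Finset.card_image_of_injective _ (Equiv.injective _)]
    have haT : a ∈ T := by simp [hT]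
    have haS : a ∉ S := by simp [hS]; omega
    have hnsub : ¬ S ⊆ T := by
      intro hsub
      have : S = T := Finset.eq_of_subset_of_card_le hsub (le_of_eq hcard.symm)
      rw [← this] at haT
      exact haS haT
    obtain ⟨q, hqS, hqT⟩ := Finset.not_subset.mp hnsub
    simp only [hS, hT, Finset.mem_filter, Finset.mem_univ, true_and] at hqS hqT
    exact ⟨q, by omega, hqS⟩
  set B := Finset.univ.filter (fun q : Fin n => (a : ℕ) < (q : ℕ) ∧ ((g q : Fin n) : ℕ) ≤ (a : ℕ)) with hBdef
  have hBne : B.Nonempty := by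
    obtain ⟨q, h1, h2⟩ := hBex
    exact ⟨q, Finset.mem_filter.mpr ⟨Finset.mem_univ _, h1, h2⟩⟩
  set b := B.min' hBne with hbdef
  have hb : (a : ℕ) < (b : ℕ) ∧ ((g b : Fin n) : ℕ) ≤ (a : ℕ) := by
    have hmem : b ∈ B := Finset.min'_mem B hBne
    exact (Finset.mem_filter.mp hmem).2
  refine ⟨a, b, hb.1, ?_, hb.2⟩
  by_contra h
  push_neg at h
  -- h : g a < b
  set J := Finset.univ.filter (fun q : Fin n => (a : ℕ) < (q : ℕ) ∧ (q : ℕ) < (b : ℕ)) with hJdef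
  have himg : J.image ⇑g ⊆ J := by
    intro x hx
    obtain ⟨q, hqJ, rfl⟩ := Finset.mem_image.mp hx
    simp only [hJdef, Finset.mem_filter, Finset.mem_univ, true_and] at hqJ ⊢
    have h1 : ((g q : Fin n) : ℕ) ≤ (q : ℕ) := hmax q hqJ.1
    constructor
    · by_contra h2
      push_neg at h2
      have hqB : q ∈ B := Finset.mem_filter.mpr ⟨Finset.mem_univ _, hqJ.1, h2⟩
      have := Finset.min'_le B q hqB
      have : (b : ℕ) ≤ (q : ℕ) := this
      omega
    · omega
  have hJeq : J.image ⇑g = J :=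
    Finset.eq_of_subset_of_card_le himg
      (le_of_eq (Finset.card_image_of_injective _ (Equiv.injective _)).symm)
  have hgaJ : g a ∈ J := by
    simp only [hJdef, Finset.mem_filter, Finset.mem_univ, true_and]
    exact ⟨ha, h⟩
  rw [← hJeq] at hgaJ
  obtain ⟨q, hqJ, hq⟩ := Finset.mem_image.mp hgaJ
  have : q = a := g.injective hq
  subst this
  simp only [hJdef, Finset.mem_filter, Finset.mem_univ, true_and] at hqJ
  omega

noncomputable def Dr (w : ℕ → ℝ) {n : ℕ} (f : Equiv.Perm (Fin n)) : ℝ :=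
  ∑ p : Fin n, wsum w (p : ℕ) ((f p : Fin n) : ℕ)

def msr {n : ℕ} (f : Equiv.Perm (Fin n)) : ℕ :=
  ∑ p : Fin n, (max ((f p : Fin n) : ℕ) (p : ℕ) - min ((f p : Fin n) : ℕ) (p : ℕ))

lemma msr_eq_zero {n : ℕ} {f : Equiv.Perm (Fin n)} (h : msr f = 0) : f = 1 := by
  apply Equiv.ext
  intro p
  have := Finset.sum_eq_zero_iff.mp h p (Finset.mem_univ p)
  have : ((f p : Fin n) : ℕ) = (p : ℕ) := by omega
  simpa using Fin.ext this

lemma lb_aux {n : ℕ} (w : ℕ → ℝ) (hw : ∀ i, 0 ≤ w i) :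
    ∀ l : List (Fin n × Fin n), (∀ p ∈ l, p.1 ≠ p.2) →
    (1/2) * Dr w (l.map fun p => Equiv.swap p.1 p.2).prod ≤
      (l.map fun p => wsum w (p.1 : ℕ) (p.2 : ℕ)).sum := by
  intro l
  induction l with
  | nil => simp [Dr, wsum_self]
  | cons hd tl ih =>
    intro h
    have hne : hd.1 ≠ hd.2 := h hd List.mem_cons_self
    have ihtl := ih (fun p hp => h p (List.mem_cons_of_mem _ hp))
    simp only [List.map_cons, List.prod_cons, List.sum_cons]
    set P := (tl.map fun p => Equiv.swap p.1 p.2).prod with hP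
    have key : Dr w (Equiv.swap hd.1 hd.2 * P) ≤
        2 * wsum w (hd.1 : ℕ) (hd.2 : ℕ) + Dr w P := by
      have step1 : Dr w (Equiv.swap hd.1 hd.2 * P) ≤
          Dr w P + ∑ p : Fin n,
            wsum w ((P p : Fin n) : ℕ) ((Equiv.swap hd.1 hd.2 (P p) : Fin n) : ℕ) := by
        simp only [Dr]
        rw [← Finset.sum_add_distrib]
        apply Finset.sum_le_sum
        intro p _
        have : (Equiv.swap hd.1 hd.2 * P) p = Equiv.swap hd.1 hd.2 (P p) :=
          Equiv.Perm.mul_apply _ _ _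
        rw [this]
        exact wsum_triangle w hw _ _ _
      have step2 : ∑ p : Fin n,
          wsum w ((P p : Fin n) : ℕ) ((Equiv.swap hd.1 hd.2 (P p) : Fin n) : ℕ) =
          2 * wsum w (hd.1 : ℕ) (hd.2 : ℕ) := by
        have hre := Equiv.sum_comp P
          (fun q : Fin n => wsum w (q : ℕ) ((Equiv.swap hd.1 hd.2 q : Fin n) : ℕ))
        rw [hre]
        rw [sum_split hne (fun q : Fin n => wsum w (q : ℕ) ((Equiv.swap hd.1 hd.2 q : Fin n) : ℕ))]
        have hz : ∑ q ∈ univ \ {hd.1, hd.2},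
            wsum w (q : ℕ) ((Equiv.swap hd.1 hd.2 q : Fin n) : ℕ) = 0 := by
          apply Finset.sum_eq_zero
          intro q hq
          simp only [Finset.mem_sdiff, Finset.mem_insert, Finset.mem_singleton] at hq
          rw [Equiv.swap_apply_of_ne_of_ne (fun h => hq.2 (Or.inl h)) (fun h => hq.2 (Or.inr h))]
          exact wsum_self w _
        rw [hz, Equiv.swap_apply_left, Equiv.swap_apply_right, wsum_comm w (hd.2 : ℕ)]
        ring
      linarith
    linarith

lemma ub_aux {n : ℕ} (w : ℕ → ℝ) (hw : ∀ i, 0 ≤ w i) :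
    ∀ (N : ℕ) (f : Equiv.Perm (Fin n)), msr f ≤ N →
    ∃ l : List (Fin n × Fin n), (∀ p ∈ l, p.1 ≠ p.2) ∧
      (l.map fun p => Equiv.swap p.1 p.2).prod = f ∧
      (l.map fun p => wsum w (p.1 : ℕ) (p.2 : ℕ)).sum = (1/2) * Dr w f := by
  intro N
  induction N with
  | zero =>
    intro f hf
    have hf1 : f = 1 := msr_eq_zero (Nat.le_zero.mp hf)
    subst hf1
    exact ⟨[], by simp, by simp, by simp [Dr, wsum_self]⟩
  | succ N ih =>
    intro f hf
    by_cases h1 : f = 1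
    · subst h1
      exact ⟨[], by simp, by simp, by simp [Dr, wsum_self]⟩
    · obtain ⟨a, b, hab, hba, hgb⟩ := exists_good_pair f h1
      have habne : a ≠ b := fun h => by rw [h] at hab; omega
      set f' := f * Equiv.swap a b with hf'
      have hf'a : f' a = f b := by rw [hf', Equiv.Perm.mul_apply, Equiv.swap_apply_left]
      have hf'b : f' b = f a := by rw [hf', Equiv.Perm.mul_apply, Equiv.swap_apply_right]
      have hf'p : ∀ p : Fin n, p ≠ a → p ≠ b → f' p = f p := by
        intro p h2 h3
        rw [hf', Equiv.Perm.mul_apply, Equiv.swap_apply_of_ne_of_ne h2 h3]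
      -- measure decreases
      have hmsr : msr f' + 2 * ((b : ℕ) - (a : ℕ)) = msr f := by
        rw [msr, msr, sum_split habne, sum_split habne]
        have htail : ∑ p ∈ univ \ {a, b},
            (max ((f' p : Fin n) : ℕ) (p : ℕ) - min ((f' p : Fin n) : ℕ) (p : ℕ)) =
            ∑ p ∈ univ \ {a, b},
            (max ((f p : Fin n) : ℕ) (p : ℕ) - min ((f p : Fin n) : ℕ) (p : ℕ)) := by
          apply Finset.sum_congr rfl
          intro p hp
          simp only [Finset.mem_sdiff, Finset.mem_insert, Finset.mem_singleton] at hp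
          rw [hf'p p (fun h => hp.2 (Or.inl h)) (fun h => hp.2 (Or.inr h))]
        rw [htail, hf'a, hf'b]
        omega
      have hmsrlt : msr f' ≤ N := by omega
      -- Dr relation
      have hD : Dr w f = Dr w f' + 2 * wsum w (a : ℕ) (b : ℕ) := by
        rw [Dr, Dr, sum_split habne, sum_split habne]
        have htail : ∑ p ∈ univ \ {a, b}, wsum w (p : ℕ) ((f p : Fin n) : ℕ) =
            ∑ p ∈ univ \ {a, b}, wsum w (p : ℕ) ((f' p : Fin n) : ℕ) := by
          apply Finset.sum_congr rfl
          intro p hp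
          simp only [Finset.mem_sdiff, Finset.mem_insert, Finset.mem_singleton] at hp
          rw [hf'p p (fun h => hp.2 (Or.inl h)) (fun h => hp.2 (Or.inr h))]
        rw [htail, hf'a, hf'b]
        have e1 : wsum w (a : ℕ) ((f a : Fin n) : ℕ) = Wp w ((f a : Fin n) : ℕ) - Wp w (a : ℕ) :=
          wsum_eq_sub w (by omega)
        have e2 : wsum w (b : ℕ) ((f b : Fin n) : ℕ) = Wp w (b : ℕ) - Wp w ((f b : Fin n) : ℕ) := by
          rw [wsum_comm]; exact wsum_eq_sub w (by omega)
        have e3 : wsum w (a : ℕ) ((f b : Fin n) : ℕ) = Wp w (a : ℕ) - Wp w ((f b : Fin n) : ℕ) := by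
          rw [wsum_comm]; exact wsum_eq_sub w (by omega)
        have e4 : wsum w (b : ℕ) ((f a : Fin n) : ℕ) = Wp w ((f a : Fin n) : ℕ) - Wp w (b : ℕ) :=
          wsum_eq_sub w (by omega)
        have e5 : wsum w (a : ℕ) (b : ℕ) = Wp w (b : ℕ) - Wp w (a : ℕ) :=
          wsum_eq_sub w (by omega)
        rw [e1, e2, e3, e4, e5]
        ring
      obtain ⟨l', hl1, hl2, hl3⟩ := ih f' hmsrlt
      refine ⟨l' ++ [(a, b)], ?_, ?_, ?_⟩
      · intro p hp
        rcases List.mem_append.mp hp with h | h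
        · exact hl1 p h
        · simp only [List.mem_singleton] at h
          rw [h]
          exact habne
      · rw [List.map_append, List.prod_append, hl2]
        simp only [List.map_cons, List.map_nil, List.prod_cons, List.prod_nil, mul_one]
        rw [hf', mul_assoc, Equiv.swap_mul_self, mul_one]
      · rw [List.map_append, List.sum_append, hl3]
        simp only [List.map_cons, List.map_nil, List.sum_cons, List.sum_nil, add_zero]
        rw [hD]
        ring


theorem stmt16 (n : ℕ) (w : ℕ → ℝ) (hw : ∀ i, 0 ≤ w i) (π σ : Equiv.Perm (Fin n)) :
    wTrans (fun a b : Fin n => wsum w (a : ℕ) (b : ℕ)) π σ =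
      (1 / 2) * ∑ i : Fin n, wsum w ((π⁻¹ i : Fin n) : ℕ) ((σ⁻¹ i : Fin n) : ℕ) := by
  classical
  set f0 := π⁻¹ * σ with hf0
  have hRHS : (∑ i : Fin n, wsum w ((π⁻¹ i : Fin n) : ℕ) ((σ⁻¹ i : Fin n) : ℕ)) = Dr w f0 := by
    rw [Dr, ← Equiv.sum_comp σ (fun i => wsum w ((π⁻¹ i : Fin n) : ℕ) ((σ⁻¹ i : Fin n) : ℕ))]
    apply Finset.sum_congr rfl
    intro p _
    have h1 : σ⁻¹ (σ p) = p := Equiv.symm_apply_apply σ p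
    have h2 : π⁻¹ (σ p) = f0 p := rfl
    simp only [h1, h2]
    rw [wsum_comm]
  obtain ⟨l0, hl0ne, hl0prod, hl0sum⟩ := ub_aux w hw (msr f0) f0 le_rfl
  have hmem : (1/2) * Dr w f0 ∈ {x | ∃ l : List (Fin n × Fin n), (∀ p ∈ l, p.1 ≠ p.2) ∧
      σ = π * (l.map fun p => Equiv.swap p.1 p.2).prod ∧
      (l.map fun p => wsum w (p.1 : ℕ) (p.2 : ℕ)).sum = x} :=
    ⟨l0, hl0ne, by rw [hl0prod, hf0, mul_inv_cancel_left], hl0sum⟩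
  have hlb : ∀ x ∈ {x | ∃ l : List (Fin n × Fin n), (∀ p ∈ l, p.1 ≠ p.2) ∧
      σ = π * (l.map fun p => Equiv.swap p.1 p.2).prod ∧
      (l.map fun p => wsum w (p.1 : ℕ) (p.2 : ℕ)).sum = x}, (1/2) * Dr w f0 ≤ x := by
    rintro x ⟨l, hlne, hlprod, rfl⟩
    have hprodeq : (l.map fun p => Equiv.swap p.1 p.2).prod = f0 := by
      rw [hf0, hlprod, inv_mul_cancel_left]
    have := lb_aux w hw l hlne
    rwa [hprodeq] at this
  rw [hRHS]
  have : wTrans (fun a b : Fin n => wsum w (a : ℕ) (b : ℕ)) π σ =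
      sInf {x | ∃ l : List (Fin n × Fin n), (∀ p ∈ l, p.1 ≠ p.2) ∧
      σ = π * (l.map fun p => Equiv.swap p.1 p.2).prod ∧
      (l.map fun p => wsum w (p.1 : ℕ) (p.2 : ℕ)).sum = x} := rfl
  rw [this]
  exact le_antisymm (csInf_le ⟨_, hlb⟩ hmem) (le_csInf ⟨_, hmem⟩ hlb)
end

section
/- For an extended-path weight function φ (where φ((i, i+1)) = w_i ≥ 0 on path edges and φ = ∞, i.e., forbidden, on all other transpositions), the weighted transposition distance satisfies (1/2)·D_φ(π,σ) ≤ d_φ(π,σ) ≤ D_φ(π,σ), where D_φ(π,σ) = Σ_i w(π⁻¹(i) : σ⁻¹(i)) and w(k:l) is the sum of w_h for h between min(k,l) and max(k,l)−1. -/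
open Equiv Finset

section AuxST17

variable {n : ℕ} (w : ℕ → ℝ)

lemma wsum_self17 (k : ℕ) : wsum w k k = 0 := by simp [wsum]

lemma wsum_nonneg17 (hw : ∀ i, 0 ≤ w i) (k l : ℕ) : 0 ≤ wsum w k l :=
  Finset.sum_nonneg fun i _ => hw i

lemma wsum_comm17 (k l : ℕ) : wsum w k l = wsum w l k := by
  rw [wsum, wsum, min_comm, max_comm]

lemma wsum_eq_abs17 (hw : ∀ i, 0 ≤ w i) (k l : ℕ) :
    wsum w k l = |(∑ h ∈ Finset.range l, w h) - ∑ h ∈ Finset.range k, w h| := by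
  have key : ∀ a b : ℕ, a ≤ b →
      wsum w a b = |(∑ h ∈ Finset.range b, w h) - ∑ h ∈ Finset.range a, w h| := by
    intro a b hab
    rw [wsum, min_eq_left hab, max_eq_right hab, Finset.sum_Ico_eq_sub _ hab,
      abs_of_nonneg]
    have : (∑ h ∈ Finset.range a, w h) ≤ ∑ h ∈ Finset.range b, w h :=
      Finset.sum_le_sum_of_subset_of_nonneg (Finset.range_subset_range.2 hab)
        (fun i _ _ => hw i)
    linarith
  rcases le_total k l with h | h
  · exact key k l h
  · rw [wsum_comm17, key l k h, abs_sub_comm]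

lemma wsum_triangle17 (hw : ∀ i, 0 ≤ w i) (x y z : ℕ) :
    wsum w x z ≤ wsum w x y + wsum w y z := by
  rw [wsum_eq_abs17 w hw, wsum_eq_abs17 w hw, wsum_eq_abs17 w hw]
  have h1 := abs_sub_le (∑ h ∈ Finset.range z, w h) (∑ h ∈ Finset.range y, w h)
    (∑ h ∈ Finset.range x, w h)
  have e1 := abs_sub_comm (∑ h ∈ Finset.range z, w h) (∑ h ∈ Finset.range x, w h)
  have e2 := abs_sub_comm (∑ h ∈ Finset.range z, w h) (∑ h ∈ Finset.range y, w h)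
  have e3 := abs_sub_comm (∑ h ∈ Finset.range y, w h) (∑ h ∈ Finset.range x, w h)
  linarith

lemma wsum_add17 {x y z : ℕ} (hxy : x ≤ y) (hyz : y ≤ z) :
    wsum w x z = wsum w x y + wsum w y z := by
  rw [wsum, wsum, wsum, min_eq_left (hxy.trans hyz), max_eq_right (hxy.trans hyz),
    min_eq_left hxy, max_eq_right hxy, min_eq_left hyz, max_eq_right hyz,
    ← Finset.sum_Ico_consecutive _ hxy hyz]

lemma wsum_single17 (h : ℕ) : wsum w h (h + 1) = w h := by
  rw [wsum, min_eq_left (Nat.le_succ h), max_eq_right (Nat.le_succ h)]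
  simp

lemma adjSwap_inv17 (n h : ℕ) : (adjSwap n h)⁻¹ = adjSwap n h := by
  unfold adjSwap; split
  · exact Equiv.swap_inv _ _
  · simp

lemma DKendall_self17 (σ : Equiv.Perm (Fin n)) : DKendall w σ σ = 0 := by
  simp [DKendall, wsum_self17]

lemma DKendall_nonneg17 (hw : ∀ i, 0 ≤ w i) (π σ : Equiv.Perm (Fin n)) :
    0 ≤ DKendall w π σ :=
  Finset.sum_nonneg fun i _ => wsum_nonneg17 w hw _ _

end AuxST17

section AuxST17b

variable {n : ℕ} (w : ℕ → ℝ)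

lemma D_pert17 (hw : ∀ i, 0 ≤ w i) (π σ : Equiv.Perm (Fin n)) (h : ℕ) :
    DKendall w π σ ≤ DKendall w (π * adjSwap n h) σ + 2 * w h := by
  set s := adjSwap n h with hs
  have hinv : ∀ v : Fin n, (π * s)⁻¹ v = s (π⁻¹ v) := by
    intro v
    have : (π * s)⁻¹ = s * π⁻¹ := by
      rw [mul_inv_rev, hs, adjSwap_inv17 n h]
    rw [this]; rfl
  have tri : ∀ v : Fin n,
      wsum w ((π⁻¹ v : Fin n) : ℕ) ((σ⁻¹ v : Fin n) : ℕ) ≤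
        wsum w ((π⁻¹ v : Fin n) : ℕ) ((s (π⁻¹ v) : Fin n) : ℕ) +
          wsum w ((s (π⁻¹ v) : Fin n) : ℕ) ((σ⁻¹ v : Fin n) : ℕ) := fun v =>
    wsum_triangle17 w hw _ _ _
  have hsum : DKendall w π σ ≤
      (∑ v : Fin n, wsum w ((π⁻¹ v : Fin n) : ℕ) ((s (π⁻¹ v) : Fin n) : ℕ)) +
        DKendall w (π * s) σ := by
    rw [DKendall, DKendall, ← Finset.sum_add_distrib]
    refine Finset.sum_le_sum fun v _ => ?_
    rw [hinv v]
    exact tri v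
  have hmove : (∑ v : Fin n, wsum w ((π⁻¹ v : Fin n) : ℕ) ((s (π⁻¹ v) : Fin n) : ℕ)) =
      ∑ x : Fin n, wsum w (x : ℕ) ((s x : Fin n) : ℕ) :=
    Equiv.sum_comp (π⁻¹ : Equiv.Perm (Fin n)) (fun x => wsum w (x : ℕ) ((s x : Fin n) : ℕ))
  have hbound : (∑ x : Fin n, wsum w (x : ℕ) ((s x : Fin n) : ℕ)) ≤ 2 * w h := by
    by_cases hn : h + 1 < n
    · have hsdef : s = Equiv.swap (⟨h, Nat.lt_of_succ_lt hn⟩ : Fin n) ⟨h + 1, hn⟩ := by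
        rw [hs, adjSwap, dif_pos hn]
      set a : Fin n := ⟨h, Nat.lt_of_succ_lt hn⟩
      set b : Fin n := ⟨h + 1, hn⟩
      have hab : a ≠ b := by
        intro hcon
        have := congrArg Fin.val hcon
        simp [a, b] at this
      have hzero : ∀ x : Fin n, x ∉ ({a, b} : Finset (Fin n)) →
          wsum w (x : ℕ) ((s x : Fin n) : ℕ) = 0 := by
        intro x hx
        simp only [Finset.mem_insert, Finset.mem_singleton] at hx
        push_neg at hx
        rw [hsdef, Equiv.swap_apply_of_ne_of_ne hx.1 hx.2, wsum_self17]
      have : (∑ x : Fin n, wsum w (x : ℕ) ((s x : Fin n) : ℕ)) =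
          ∑ x ∈ ({a, b} : Finset (Fin n)), wsum w (x : ℕ) ((s x : Fin n) : ℕ) :=
        (Finset.sum_subset (Finset.subset_univ _) (fun x _ hx => hzero x hx)).symm
      rw [this, Finset.sum_pair hab, hsdef, Equiv.swap_apply_left, Equiv.swap_apply_right]
      have hav : (a : ℕ) = h := rfl
      have hbv : (b : ℕ) = h + 1 := rfl
      rw [hav, hbv, wsum_single17, wsum_comm17, wsum_single17]
      ring_nf
      exact le_refl _
    · have hsdef : s = 1 := by rw [hs, adjSwap, dif_neg hn]
      rw [hsdef]
      simp only [Equiv.Perm.coe_one, id_eq]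
      have hz : (∑ x : Fin n, wsum w (x : ℕ) (x : ℕ)) = 0 :=
        Finset.sum_eq_zero fun x _ => wsum_self17 w (x : ℕ)
      rw [hz]
      linarith [hw h]
  calc DKendall w π σ ≤ _ := hsum
    _ ≤ 2 * w h + DKendall w (π * s) σ := by rw [hmove]; linarith
    _ = DKendall w (π * s) σ + 2 * w h := by ring

lemma lower_list17 (hw : ∀ i, 0 ≤ w i) :
    ∀ (l : List ℕ) (π : Equiv.Perm (Fin n)),
      DKendall w π (π * (l.map (adjSwap n)).prod) ≤ 2 * (l.map w).sum := by
  intro l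
  induction l with
  | nil =>
    intro π
    simp only [List.map_nil, List.prod_nil, mul_one, List.sum_nil, mul_zero]
    exact le_of_eq (DKendall_self17 w π)
  | cons h t ih =>
    intro π
    have : π * ((List.map (adjSwap n) (h :: t)).prod) =
        (π * adjSwap n h) * ((t.map (adjSwap n)).prod) := by
      simp [List.prod_cons, mul_assoc]
    rw [this]
    calc DKendall w π ((π * adjSwap n h) * ((t.map (adjSwap n)).prod))
        ≤ DKendall w (π * adjSwap n h) ((π * adjSwap n h) * ((t.map (adjSwap n)).prod))
            + 2 * w h := D_pert17 w hw _ _ h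
      _ ≤ 2 * (t.map w).sum + 2 * w h := by linarith [ih (π * adjSwap n h)]
      _ = 2 * ((h :: t).map w).sum := by simp [List.sum_cons]; ring

end AuxST17b

section AuxST17c

variable {n : ℕ} (w : ℕ → ℝ)

def swapList17 (i : ℕ) : ℕ → List ℕ
  | 0 => []
  | 1 => [i]
  | (k + 2) => (i + k + 1) :: (swapList17 i (k + 1) ++ [i + k + 1])

lemma swapList17_mem : ∀ (k : ℕ) (x : ℕ), x ∈ swapList17 i k → i ≤ x ∧ x + 1 ≤ i + k := by
  intro k
  induction k using Nat.strong_induction_on with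
  | _ k ih =>
    match k with
    | 0 => intro x hx; simp [swapList17] at hx
    | 1 => intro x hx; simp [swapList17] at hx; omega
    | (m + 2) =>
      intro x hx
      simp only [swapList17, List.mem_cons, List.mem_append, List.mem_singleton,
        or_assoc] at hx
      rcases hx with h | h | h | h
      · omega
      · have := ih (m + 1) (by omega) x h; omega
      · omega
      · simp at h

lemma swapList17_cost (hw : ∀ i, 0 ≤ w i) :
    ∀ (k i : ℕ), ((swapList17 i k).map w).sum ≤ 2 * wsum w i (i + k) := by
  intro k
  induction k using Nat.strong_induction_on with
  | _ k ih =>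
    match k with
    | 0 => intro i; simp [swapList17, wsum_self17]
    | 1 =>
      intro i
      simp only [swapList17, List.map_cons, List.map_nil, List.sum_cons, List.sum_nil,
        add_zero, wsum_single17]
      linarith [hw i]
    | (m + 2) =>
      intro i
      have hrec := ih (m + 1) (by omega) i
      have hadd : wsum w i (i + (m + 2)) = wsum w i (i + (m + 1)) + w (i + m + 1) := by
        have := wsum_add17 w (show i ≤ i + (m + 1) by omega)
          (show i + (m + 1) ≤ i + (m + 2) by omega)
        rw [this]
        have : wsum w (i + (m + 1)) (i + (m + 2)) = w (i + (m + 1)) := by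
          have := wsum_single17 w (i + (m + 1))
          simpa [show i + (m + 1) + 1 = i + (m + 2) by omega] using this
        rw [this]
        ring_nf
      simp only [swapList17, List.map_cons, List.sum_cons, List.map_append, List.sum_append,
        List.map_cons, List.map_nil, List.sum_cons, List.sum_nil, add_zero]
      rw [hadd]
      have : i + m + 1 = i + (m + 1) := by omega
      rw [this]
      linarith

lemma swapList17_prod :
    ∀ (k i : ℕ) (h : i + k < n) (hi : i < n),
      ((swapList17 i k).map (adjSwap n)).prod =
        Equiv.swap (⟨i, hi⟩ : Fin n) ⟨i + k, h⟩ := by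
  intro k
  induction k using Nat.strong_induction_on with
  | _ k ih =>
    match k with
    | 0 =>
      intro i h hi
      simp only [swapList17, List.map_nil, List.prod_nil]
      rw [show (⟨i + 0, h⟩ : Fin n) = ⟨i, hi⟩ by simp]
      exact (Equiv.swap_self _).symm
    | 1 =>
      intro i h hi
      simp only [swapList17, List.map_cons, List.map_nil, List.prod_cons, List.prod_nil,
        mul_one]
      rw [adjSwap, dif_pos h]
    | (m + 2) =>
      intro i h hi
      have hlt : i + (m + 1) < n := by omega
      have hrec := ih (m + 1) (by omega) i hlt hi
      have hsw : adjSwap n (i + m + 1) =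
          Equiv.swap (⟨i + m + 1, by omega⟩ : Fin n) ⟨i + m + 2, by omega⟩ := by
        rw [adjSwap, dif_pos (show i + m + 1 + 1 < n by omega)]
      simp only [swapList17, List.map_cons, List.prod_cons, List.map_append,
        List.prod_append, List.map_nil, List.prod_nil, mul_one, List.map_cons,
        List.prod_cons]
      rw [hrec, hsw]
      set s := Equiv.swap (⟨i + m + 1, by omega⟩ : Fin n) ⟨i + m + 2, by omega⟩ with hsdef
      have hs_inv : s⁻¹ = s := Equiv.swap_inv _ _
      have happ : Equiv.swap (s ⟨i, hi⟩) (s ⟨i + (m + 1), hlt⟩) = s * Equiv.swap ⟨i, hi⟩ ⟨i + (m + 1), hlt⟩ * s⁻¹ :=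
        Equiv.swap_apply_apply s _ _
      have h1 : s ⟨i, hi⟩ = ⟨i, hi⟩ := by
        apply Equiv.swap_apply_of_ne_of_ne
        · intro hc; have := congrArg Fin.val hc; simp at this; omega
        · intro hc; have := congrArg Fin.val hc; simp at this; omega
      have h2 : s ⟨i + (m + 1), hlt⟩ = ⟨i + m + 2, by omega⟩ := by
        have : (⟨i + (m + 1), hlt⟩ : Fin n) = ⟨i + m + 1, by omega⟩ := by
          apply Fin.ext; simp; omega
        rw [this]
        exact Equiv.swap_apply_left _ _
      rw [h1, h2] at happ
      rw [hs_inv] at happ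
      have goal2 : (⟨i + m + 2, by omega⟩ : Fin n) = ⟨i + (m + 2), h⟩ := by
        apply Fin.ext; simp; omega
      rw [← goal2, ← mul_assoc, ← happ]

end AuxST17c

section AuxST17d

variable {n : ℕ} (w : ℕ → ℝ)

lemma D_drop17 (π σ : Equiv.Perm (Fin n)) (i j : Fin n)
    (hij : (i : ℕ) < (j : ℕ))
    (ha : (j : ℕ) ≤ ((σ⁻¹ (π i) : Fin n) : ℕ))
    (hb : ((σ⁻¹ (π j) : Fin n) : ℕ) ≤ (i : ℕ)) :
    DKendall w π σ = DKendall w (π * Equiv.swap i j) σ + 2 * wsum w (i : ℕ) (j : ℕ) := by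
  set s := Equiv.swap i j with hs
  have hinv : ∀ v : Fin n, (π * s)⁻¹ v = s (π⁻¹ v) := by
    intro v
    have : (π * s)⁻¹ = s * π⁻¹ := by rw [mul_inv_rev, hs, Equiv.swap_inv]
    rw [this]; rfl
  set a := π i with hadef
  set b := π j with hbdef
  have hiabne : i ≠ j := fun hc => absurd (congrArg Fin.val hc) (by omega)
  have hab : a ≠ b := fun hc => hiabne (π.injective hc)
  have hdiff : DKendall w π σ - DKendall w (π * s) σ = 2 * wsum w (i : ℕ) (j : ℕ) := by
    rw [DKendall, DKendall, ← Finset.sum_sub_distrib]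
    have hzero : ∀ v : Fin n, v ∉ ({a, b} : Finset (Fin n)) →
        wsum w ((π⁻¹ v : Fin n) : ℕ) ((σ⁻¹ v : Fin n) : ℕ) -
          wsum w (((π * s)⁻¹ v : Fin n) : ℕ) ((σ⁻¹ v : Fin n) : ℕ) = 0 := by
      intro v hv
      simp only [Finset.mem_insert, Finset.mem_singleton] at hv
      push_neg at hv
      have h1 : π⁻¹ v ≠ i := fun hc => hv.1 (by rw [hadef, ← hc, Equiv.Perm.coe_inv, Equiv.apply_symm_apply])
      have h2 : π⁻¹ v ≠ j := fun hc => hv.2 (by rw [hbdef, ← hc, Equiv.Perm.coe_inv, Equiv.apply_symm_apply])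
      rw [hinv v, hs, Equiv.swap_apply_of_ne_of_ne h1 h2]
      ring
    have hsum_pair : (∑ v : Fin n,
        (wsum w ((π⁻¹ v : Fin n) : ℕ) ((σ⁻¹ v : Fin n) : ℕ) -
          wsum w (((π * s)⁻¹ v : Fin n) : ℕ) ((σ⁻¹ v : Fin n) : ℕ))) =
        ∑ v ∈ ({a, b} : Finset (Fin n)),
        (wsum w ((π⁻¹ v : Fin n) : ℕ) ((σ⁻¹ v : Fin n) : ℕ) -
          wsum w (((π * s)⁻¹ v : Fin n) : ℕ) ((σ⁻¹ v : Fin n) : ℕ)) :=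
      (Finset.sum_subset (Finset.subset_univ _) (fun v _ hv => hzero v hv)).symm
    rw [hsum_pair, Finset.sum_pair hab]
    have hpia : π⁻¹ a = i := by rw [hadef, Equiv.Perm.coe_inv, Equiv.symm_apply_apply]
    have hpib : π⁻¹ b = j := by rw [hbdef, Equiv.Perm.coe_inv, Equiv.symm_apply_apply]
    have hsa : (π * s)⁻¹ a = j := by rw [hinv, hpia, hs, Equiv.swap_apply_left]
    have hsb : (π * s)⁻¹ b = i := by rw [hinv, hpib, hs, Equiv.swap_apply_right]
    rw [hpia, hpib, hsa, hsb]
    have hta : wsum w (i : ℕ) ((σ⁻¹ a : Fin n) : ℕ) =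
        wsum w (i : ℕ) (j : ℕ) + wsum w (j : ℕ) ((σ⁻¹ a : Fin n) : ℕ) :=
      wsum_add17 w (le_of_lt hij) ha
    have htb : wsum w ((σ⁻¹ b : Fin n) : ℕ) (j : ℕ) =
        wsum w ((σ⁻¹ b : Fin n) : ℕ) (i : ℕ) + wsum w (i : ℕ) (j : ℕ) :=
      wsum_add17 w hb (le_of_lt hij)
    have hc1 : wsum w ((j : ℕ)) ((σ⁻¹ b : Fin n) : ℕ) = wsum w ((σ⁻¹ b : Fin n) : ℕ) ((j : ℕ)) :=
      wsum_comm17 w _ _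
    have hc2 : wsum w ((i : ℕ)) ((σ⁻¹ b : Fin n) : ℕ) = wsum w ((σ⁻¹ b : Fin n) : ℕ) ((i : ℕ)) :=
      wsum_comm17 w _ _
    linarith
  linarith

lemma good_pair17 (π σ : Equiv.Perm (Fin n)) (hne : π ≠ σ) :
    ∃ i j : Fin n, (i : ℕ) < (j : ℕ) ∧ (j : ℕ) ≤ ((σ⁻¹ (π i) : Fin n) : ℕ) ∧
      ((σ⁻¹ (π j) : Fin n) : ℕ) ≤ (i : ℕ) := by
  have hex : ∃ k : Fin n, π k ≠ σ k := by
    by_contra hcon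
    push_neg at hcon
    exact hne (Equiv.ext hcon)
  set S : Finset (Fin n) := Finset.univ.filter (fun k => π k ≠ σ k) with hS
  have hSne : S.Nonempty := by
    obtain ⟨k, hk⟩ := hex
    exact ⟨k, by simp [hS, hk]⟩
  set i₀ := S.min' hSne with hi₀
  have hi₀mem : π i₀ ≠ σ i₀ := by
    have := S.min'_mem hSne
    simp [hS] at this
    exact this
  have hmin : ∀ k : Fin n, π k ≠ σ k → i₀ ≤ k := fun k hk =>
    S.min'_le k (by simp [hS, hk])
  set j₀ := π⁻¹ (σ i₀) with hj₀
  have hπj₀ : π j₀ = σ i₀ := by rw [hj₀, Equiv.Perm.coe_inv, Equiv.apply_symm_apply]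
  have htj₀ : σ⁻¹ (π j₀) = i₀ := by rw [hπj₀, Equiv.Perm.coe_inv, Equiv.symm_apply_apply]
  have hne0 : j₀ ≠ i₀ := by
    intro hc
    exact hi₀mem (by rw [← hc, hπj₀]; rw [hc])
  have hij₀ : i₀ < j₀ := by
    rcases lt_trichotomy i₀ j₀ with h | h | h
    · exact h
    · exact absurd h.symm hne0
    · exfalso
      have heq : π j₀ = σ j₀ := by
        by_contra hcc
        exact absurd (hmin j₀ hcc) (not_le.2 h)
      exact hne0 (σ.injective (by rw [← heq, hπj₀]))
  have hexists : ∃ i : Fin n, i < j₀ ∧ (j₀ : ℕ) ≤ ((σ⁻¹ (π i) : Fin n) : ℕ) := by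
    by_contra hcon
    push_neg at hcon
    have maps : ∀ x ∈ Finset.Iic j₀, σ⁻¹ (π x) ∈ Finset.Iio j₀ := by
      intro x hx
      rw [Finset.mem_Iic] at hx
      rcases lt_or_eq_of_le hx with hlt | heq
      · rw [Finset.mem_Iio]
        have := hcon x hlt
        exact Fin.lt_def.2 this
      · rw [Finset.mem_Iio, heq, htj₀]
        exact hij₀
    have inj : Set.InjOn (fun x => σ⁻¹ (π x)) ↑(Finset.Iic j₀) := by
      intro x _ y _ hxy
      simp only at hxy
      exact π.injective (σ⁻¹.injective hxy)
    have hcard := Finset.card_le_card_of_injOn _ maps inj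
    have hss : Finset.Iio j₀ ⊂ Finset.Iic j₀ := by
      rw [Finset.ssubset_def]
      constructor
      · intro x hx
        rw [Finset.mem_Iic]
        exact le_of_lt (Finset.mem_Iio.1 hx)
      · intro hsub
        have := hsub (Finset.mem_Iic.2 (le_refl j₀))
        exact lt_irrefl _ (Finset.mem_Iio.1 this)
    have := Finset.card_lt_card hss
    omega
  obtain ⟨i, hi_lt, hti⟩ := hexists
  have hine : π i ≠ σ i := by
    intro hc
    have : σ⁻¹ (π i) = i := by rw [hc, Equiv.Perm.coe_inv, Equiv.symm_apply_apply]
    rw [this] at hti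
    exact absurd hti (not_le.2 (Fin.lt_def.1 hi_lt))
  have hi₀le : i₀ ≤ i := hmin i hine
  exact ⟨i, j₀, Fin.lt_def.1 hi_lt, hti, by rw [htj₀]; exact hi₀le⟩

end AuxST17d

section AuxST17e

variable {n : ℕ} (w : ℕ → ℝ)

lemma exists_sort17 (hw : ∀ i, 0 ≤ w i) (σ : Equiv.Perm (Fin n)) :
    ∀ (N : ℕ) (π : Equiv.Perm (Fin n)),
      (∑ v : Fin n, Nat.dist ((π⁻¹ v : Fin n) : ℕ) ((σ⁻¹ v : Fin n) : ℕ)) ≤ N →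
      ∃ l : List ℕ, (∀ x ∈ l, x + 1 < n) ∧ σ = π * (l.map (adjSwap n)).prod ∧
        (l.map w).sum ≤ DKendall w π σ := by
  have base : ∀ π : Equiv.Perm (Fin n), π = σ →
      ∃ l : List ℕ, (∀ x ∈ l, x + 1 < n) ∧ σ = π * (l.map (adjSwap n)).prod ∧
        (l.map w).sum ≤ DKendall w π σ := by
    intro π hps
    refine ⟨[], by simp, by simp [hps], ?_⟩
    simpa using DKendall_nonneg17 w hw π σ
  intro N
  induction N with
  | zero =>
    intro π hM
    have hall : ∀ v : Fin n, π⁻¹ v = σ⁻¹ v := by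
      intro v
      have h0 : Nat.dist ((π⁻¹ v : Fin n) : ℕ) ((σ⁻¹ v : Fin n) : ℕ) = 0 :=
        Finset.sum_eq_zero_iff.1 (Nat.le_zero.1 hM) v (Finset.mem_univ v)
      exact Fin.ext (Nat.eq_of_dist_eq_zero h0)
    have : π⁻¹ = σ⁻¹ := Equiv.ext hall
    exact base π (inv_injective this)
  | succ N ih =>
    intro π hM
    by_cases hps : π = σ
    · exact base π hps
    · obtain ⟨i, j, hij, ha, hb⟩ := good_pair17 π σ hps
      set s := Equiv.swap i j with hs
      set π' := π * s with hπ'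
      have hinv : ∀ v : Fin n, π'⁻¹ v = s (π⁻¹ v) := by
        intro v
        have : π'⁻¹ = s * π⁻¹ := by rw [hπ', mul_inv_rev, hs, Equiv.swap_inv]
        rw [this]; rfl
      set a := π i with hadef
      set b := π j with hbdef
      have hpia : π⁻¹ a = i := by rw [hadef, Equiv.Perm.coe_inv, Equiv.symm_apply_apply]
      have hpib : π⁻¹ b = j := by rw [hbdef, Equiv.Perm.coe_inv, Equiv.symm_apply_apply]
      -- measure decreases strictly
      have hdec : (∑ v : Fin n, Nat.dist ((π'⁻¹ v : Fin n) : ℕ) ((σ⁻¹ v : Fin n) : ℕ)) <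
          ∑ v : Fin n, Nat.dist ((π⁻¹ v : Fin n) : ℕ) ((σ⁻¹ v : Fin n) : ℕ) := by
        apply Finset.sum_lt_sum
        · intro v _
          rw [hinv v]
          by_cases hvi : π⁻¹ v = i
          · have hva : v = a := by rw [hadef, ← hvi, Equiv.Perm.coe_inv, Equiv.apply_symm_apply]
            rw [hvi, hs, Equiv.swap_apply_left]
            have hta : (j : ℕ) ≤ ((σ⁻¹ v : Fin n) : ℕ) := by rw [hva]; exact ha
            simp only [Nat.dist]
            omega
          · by_cases hvj : π⁻¹ v = j
            · have hvb : v = b := by rw [hbdef, ← hvj, Equiv.Perm.coe_inv, Equiv.apply_symm_apply]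
              rw [hvj, hs, Equiv.swap_apply_right]
              have htb : ((σ⁻¹ v : Fin n) : ℕ) ≤ (i : ℕ) := by rw [hvb]; exact hb
              simp only [Nat.dist]
              omega
            · rw [hs, Equiv.swap_apply_of_ne_of_ne hvi hvj]
        · refine ⟨a, Finset.mem_univ a, ?_⟩
          rw [hinv a, hpia, hs, Equiv.swap_apply_left]
          have hta : (j : ℕ) ≤ ((σ⁻¹ a : Fin n) : ℕ) := ha
          simp only [Nat.dist]
          omega
      have hM' : (∑ v : Fin n, Nat.dist ((π'⁻¹ v : Fin n) : ℕ) ((σ⁻¹ v : Fin n) : ℕ)) ≤ N := by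
        omega
      obtain ⟨l', hval', hσ', hcost'⟩ := ih π' hM'
      set k := (j : ℕ) - (i : ℕ) with hk
      have hik : (i : ℕ) + k = (j : ℕ) := by omega
      have hjn : (i : ℕ) + k < n := by rw [hik]; exact j.isLt
      have hprod : ((swapList17 (i : ℕ) k).map (adjSwap n)).prod = s := by
        rw [swapList17_prod k (i : ℕ) hjn i.isLt, hs]
        have e1 : (⟨(i : ℕ), i.isLt⟩ : Fin n) = i := Fin.ext rfl
        have e2 : (⟨(i : ℕ) + k, hjn⟩ : Fin n) = j := Fin.ext hik
        rw [e1, e2]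
      refine ⟨swapList17 (i : ℕ) k ++ l', ?_, ?_, ?_⟩
      · intro x hx
        rcases List.mem_append.1 hx with hx | hx
        · have := swapList17_mem k x hx
          omega
        · exact hval' x hx
      · rw [List.map_append, List.prod_append, hprod, hσ', hπ', mul_assoc]
      · rw [List.map_append, List.sum_append]
        have hc1 := swapList17_cost w hw k (i : ℕ)
        rw [hik] at hc1
        have hD := D_drop17 w π σ i j hij ha hb
        rw [← hs, ← hπ'] at hD
        linarith

end AuxST17e

theorem stmt17 (n : ℕ) (w : ℕ → ℝ) (hw : ∀ i, 0 ≤ w i) (π σ : Equiv.Perm (Fin n)) :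
    (1 / 2) * DKendall w π σ ≤ wKendall w π σ ∧ wKendall w π σ ≤ DKendall w π σ := by
  obtain ⟨l₀, hv₀, hσ₀, hc₀⟩ := exists_sort17 w hw σ
    (∑ v : Fin n, Nat.dist ((π⁻¹ v : Fin n) : ℕ) ((σ⁻¹ v : Fin n) : ℕ)) π le_rfl
  have hmem : ((l₀.map w).sum) ∈ {x | ∃ l : List ℕ, (∀ i ∈ l, i + 1 < n) ∧
      σ = π * (l.map (adjSwap n)).prod ∧ (l.map w).sum = x} := ⟨l₀, hv₀, hσ₀, rfl⟩
  have hbdd : BddBelow {x | ∃ l : List ℕ, (∀ i ∈ l, i + 1 < n) ∧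
      σ = π * (l.map (adjSwap n)).prod ∧ (l.map w).sum = x} := by
    refine ⟨0, ?_⟩
    rintro x ⟨l, _, _, rfl⟩
    apply List.sum_nonneg
    intro y hy
    obtain ⟨z, _, rfl⟩ := List.mem_map.1 hy
    exact hw z
  constructor
  · rw [wKendall]
    apply le_csInf ⟨_, hmem⟩
    rintro x ⟨l, hvl, hσl, rfl⟩
    have hlow := lower_list17 w hw l π
    rw [← hσl] at hlow
    linarith
  · rw [wKendall]
    exact le_trans (csInf_le hbdd hmem) hc₀
end

section
/- The expected weighted Kendall distance of a uniformly random permutation π in S_n from the identity, for a decreasing weight function φ, equals Σ_{s=1}^{n-1} φ((s, s+1))·(n−s)·(H_n − H_{n−s}), where H_k = Σ_{l=1}^k 1/l is the k-th harmonic number. In particular, taking φ ≡ 1 recovers E[K(π,e)] = (1/2)·C(n,2), and taking φ((s,s+1)) = n−s yields E[d_φ(π,e)] = (1/2)·C(n,2) + (2/3)·C(n,3). -/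
open Equiv Finset

/-- The `k`-th harmonic number. -/
noncomputable def harmonicNum (k : ℕ) : ℝ := ∑ l ∈ Finset.Icc 1 k, (1 : ℝ) / l


/-! ### Auxiliary development -/

lemma Equiv.Perm.inv_apply_self {α : Type*} (f : Equiv.Perm α) (x : α) : f⁻¹ (f x) = x :=
  f.symm_apply_apply x

lemma Equiv.Perm.apply_inv_self {α : Type*} (f : Equiv.Perm α) (x : α) : f (f⁻¹ x) = x :=
  f.apply_symm_apply x

def eA {n : ℕ} (π : Equiv.Perm (Fin n)) (a : Fin n) : ℕ :=
  (Finset.univ.filter fun k => a < k ∧ π⁻¹ a < π⁻¹ k).card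

noncomputable def WV {n : ℕ} (φ : ℕ → ℝ) (π : Equiv.Perm (Fin n)) : ℝ :=
  ∑ a : Fin n, ∑ r ∈ Finset.Ico (eA π a) (n - 1 - (a : ℕ)), φ (n - 2 - r)

def invN {n : ℕ} (π : Equiv.Perm (Fin n)) : ℕ :=
  ∑ a : Fin n, (n - 1 - (a : ℕ) - eA π a)

lemma eA_le {n : ℕ} (π : Equiv.Perm (Fin n)) (a : Fin n) : eA π a ≤ n - 1 - (a : ℕ) := by
  have h1 : (Finset.univ.filter fun k => a < k ∧ π⁻¹ a < π⁻¹ k) ⊆ Finset.Ioi a := by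
    intro k hk
    simp only [Finset.mem_filter, Finset.mem_Ioi] at *
    exact hk.2.1
  have := Finset.card_le_card h1
  simpa [eA, Fin.card_Ioi] using this

lemma eA_one {n : ℕ} (a : Fin n) : eA (1 : Equiv.Perm (Fin n)) a = n - 1 - (a : ℕ) := by
  have : (Finset.univ.filter fun k => a < k ∧ (1 : Equiv.Perm (Fin n))⁻¹ a < (1 : Equiv.Perm (Fin n))⁻¹ k) = Finset.Ioi a := by
    ext k; simp [Finset.mem_Ioi]
  unfold eA
  rw [this, Fin.card_Ioi]

lemma WV_one {n : ℕ} (φ : ℕ → ℝ) : WV φ (1 : Equiv.Perm (Fin n)) = 0 := by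
  simp [WV, eA_one]

lemma invN_one {n : ℕ} : invN (1 : Equiv.Perm (Fin n)) = 0 := by
  simp [invN, eA_one]

lemma adjSwap_inv_apply {n h : ℕ} (hn : h + 1 < n) (π : Equiv.Perm (Fin n)) (k : Fin n) :
    (π * adjSwap n h)⁻¹ k =
      Equiv.swap (⟨h, Nat.lt_of_succ_lt hn⟩ : Fin n) ⟨h + 1, hn⟩ (π⁻¹ k) := by
  have : adjSwap n h = Equiv.swap (⟨h, Nat.lt_of_succ_lt hn⟩ : Fin n) ⟨h + 1, hn⟩ := dif_pos hn
  rw [this, mul_inv_rev, Equiv.Perm.mul_apply, Equiv.swap_inv]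

lemma swap_lt_iff {n h : ℕ} (hn : h + 1 < n) {c j : Fin n} (h1 : (c : ℕ) ≠ h) (h2 : (c : ℕ) ≠ h + 1) :
    c < Equiv.swap (⟨h, Nat.lt_of_succ_lt hn⟩ : Fin n) ⟨h + 1, hn⟩ j ↔ c < j := by
  rcases eq_or_ne j ⟨h, Nat.lt_of_succ_lt hn⟩ with rfl | hj1
  · rw [Equiv.swap_apply_left]; simp only [Fin.lt_def]; omega
  rcases eq_or_ne j ⟨h + 1, hn⟩ with rfl | hj2
  · rw [Equiv.swap_apply_right]; simp only [Fin.lt_def]; omega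
  · rw [Equiv.swap_apply_of_ne_of_ne hj1 hj2]

section Step

variable {n h : ℕ} (hn : h + 1 < n) (π : Equiv.Perm (Fin n))

lemma eA_step_ne (hyx : π ⟨h + 1, hn⟩ < π ⟨h, Nat.lt_of_succ_lt hn⟩)
    (a : Fin n) (ha : a ≠ π ⟨h + 1, hn⟩) :
    eA (π * adjSwap n h) a = eA π a := by
  set i : Fin n := ⟨h, Nat.lt_of_succ_lt hn⟩ with hidef
  set i' : Fin n := ⟨h + 1, hn⟩ with hi'def
  unfold eA
  congr 1
  apply Finset.filter_congr
  intro k _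
  rw [adjSwap_inv_apply hn, adjSwap_inv_apply hn]
  by_cases hax : a = π i
  · subst hax
    rw [Equiv.Perm.inv_apply_self, Equiv.swap_apply_left]
    constructor <;> rintro ⟨hk1, hk2⟩ <;> refine ⟨hk1, ?_⟩
    · have hkx : k ≠ π i := ne_of_gt hk1
      have hky : k ≠ π i' := by
        intro hkeq; rw [hkeq] at hk1; exact absurd hk1 (not_lt.2 (le_of_lt hyx))
      have hpi : π⁻¹ k ≠ i := fun hc => hkx (by rw [← hc, Equiv.Perm.apply_inv_self])
      have hpi' : π⁻¹ k ≠ i' := fun hc => hky (by rw [← hc, Equiv.Perm.apply_inv_self])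
      rw [Equiv.swap_apply_of_ne_of_ne hpi hpi'] at hk2
      have h1 : ((π⁻¹ k : Fin n) : ℕ) ≠ h := fun hc => hpi (Fin.ext hc)
      have h2 : ((π⁻¹ k : Fin n) : ℕ) ≠ h + 1 := fun hc => hpi' (Fin.ext hc)
      simp only [Fin.lt_def, Fin.val_mk] at hk2 ⊢
      (have hi1 : (i : ℕ) = h := rfl; have hi2 : (i' : ℕ) = h + 1 := rfl; omega)
    · have hkx : k ≠ π i := ne_of_gt hk1
      have hky : k ≠ π i' := by
        intro hkeq; rw [hkeq] at hk1; exact absurd hk1 (not_lt.2 (le_of_lt hyx))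
      have hpi : π⁻¹ k ≠ i := fun hc => hkx (by rw [← hc, Equiv.Perm.apply_inv_self])
      have hpi' : π⁻¹ k ≠ i' := fun hc => hky (by rw [← hc, Equiv.Perm.apply_inv_self])
      rw [Equiv.swap_apply_of_ne_of_ne hpi hpi']
      have h1 : ((π⁻¹ k : Fin n) : ℕ) ≠ h := fun hc => hpi (Fin.ext hc)
      have h2 : ((π⁻¹ k : Fin n) : ℕ) ≠ h + 1 := fun hc => hpi' (Fin.ext hc)
      simp only [Fin.lt_def, Fin.val_mk] at hk2 ⊢
      (have hi1 : (i : ℕ) = h := rfl; have hi2 : (i' : ℕ) = h + 1 := rfl; omega)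
  · have hpi : π⁻¹ a ≠ i := fun hc => hax (by rw [← hc, Equiv.Perm.apply_inv_self])
    have hpi' : π⁻¹ a ≠ i' := fun hc => ha (by rw [← hc, Equiv.Perm.apply_inv_self])
    rw [Equiv.swap_apply_of_ne_of_ne hpi hpi']
    have h1 : ((π⁻¹ a : Fin n) : ℕ) ≠ h := fun hc => hpi (Fin.ext hc)
    have h2 : ((π⁻¹ a : Fin n) : ℕ) ≠ h + 1 := fun hc => hpi' (Fin.ext hc)
    exact and_congr_right fun _ => swap_lt_iff hn h1 h2

lemma eA_step_y (hyx : π ⟨h + 1, hn⟩ < π ⟨h, Nat.lt_of_succ_lt hn⟩) :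
    eA (π * adjSwap n h) (π ⟨h + 1, hn⟩) = eA π (π ⟨h + 1, hn⟩) + 1 := by
  set i : Fin n := ⟨h, Nat.lt_of_succ_lt hn⟩ with hidef
  set i' : Fin n := ⟨h + 1, hn⟩ with hi'def
  set y := π i' with hydef
  set x := π i with hxdef
  have hA' : (Finset.univ.filter fun k => y < k ∧ (π * adjSwap n h)⁻¹ y < (π * adjSwap n h)⁻¹ k)
      = insert x (Finset.univ.filter fun k => y < k ∧ π⁻¹ y < π⁻¹ k) := by
    ext k
    simp only [Finset.mem_filter, Finset.mem_univ, true_and, Finset.mem_insert]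
    rw [adjSwap_inv_apply hn, adjSwap_inv_apply hn, Equiv.Perm.inv_apply_self,
      Equiv.swap_apply_right]
    constructor
    · rintro ⟨hk1, hk2⟩
      by_cases hkx : k = x
      · exact Or.inl hkx
      · right
        have hky : k ≠ y := ne_of_gt hk1
        have hpi : π⁻¹ k ≠ i := fun hc => hkx (by rw [hxdef, ← hc, Equiv.Perm.apply_inv_self])
        have hpi' : π⁻¹ k ≠ i' := fun hc => hky (by rw [hydef, ← hc, Equiv.Perm.apply_inv_self])
        rw [Equiv.swap_apply_of_ne_of_ne hpi hpi'] at hk2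
        have h1 : ((π⁻¹ k : Fin n) : ℕ) ≠ h := fun hc => hpi (Fin.ext hc)
        have h2 : ((π⁻¹ k : Fin n) : ℕ) ≠ h + 1 := fun hc => hpi' (Fin.ext hc)
        refine ⟨hk1, ?_⟩
        simp only [Fin.lt_def, Fin.val_mk] at hk2 ⊢
        (have hi1 : (i : ℕ) = h := rfl; have hi2 : (i' : ℕ) = h + 1 := rfl; omega)
    · rintro (rfl | ⟨hk1, hk2⟩)
      · refine ⟨hyx, ?_⟩
        rw [hxdef, Equiv.Perm.inv_apply_self, Equiv.swap_apply_left]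
        simp only [Fin.lt_def, Fin.val_mk]; omega
      · refine ⟨hk1, ?_⟩
        have hky : k ≠ y := ne_of_gt hk1
        have hkx : k ≠ x := by
          intro hkeq
          rw [hkeq, hxdef, Equiv.Perm.inv_apply_self] at hk2
          simp only [Fin.lt_def, Fin.val_mk] at hk2; (have hi1 : (i : ℕ) = h := rfl; have hi2 : (i' : ℕ) = h + 1 := rfl; omega)
        have hpi : π⁻¹ k ≠ i := fun hc => hkx (by rw [hxdef, ← hc, Equiv.Perm.apply_inv_self])
        have hpi' : π⁻¹ k ≠ i' := fun hc => hky (by rw [hydef, ← hc, Equiv.Perm.apply_inv_self])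
        rw [Equiv.swap_apply_of_ne_of_ne hpi hpi']
        have h1 : ((π⁻¹ k : Fin n) : ℕ) ≠ h := fun hc => hpi (Fin.ext hc)
        have h2 : ((π⁻¹ k : Fin n) : ℕ) ≠ h + 1 := fun hc => hpi' (Fin.ext hc)
        simp only [Fin.lt_def, Fin.val_mk] at hk2 ⊢
        (have hi1 : (i : ℕ) = h := rfl; have hi2 : (i' : ℕ) = h + 1 := rfl; omega)
  have hxnot : x ∉ (Finset.univ.filter fun k => y < k ∧ π⁻¹ y < π⁻¹ k) := by
    simp only [Finset.mem_filter, Finset.mem_univ, true_and, not_and]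
    intro _
    rw [hxdef, hydef, Equiv.Perm.inv_apply_self, Equiv.Perm.inv_apply_self]
    simp only [Fin.lt_def, Fin.val_mk, not_lt]; (have hi1 : (i : ℕ) = h := rfl; have hi2 : (i' : ℕ) = h + 1 := rfl; omega)
  unfold eA
  rw [hA', Finset.card_insert_of_notMem hxnot]

lemma eA_y_lt (hyx : π ⟨h + 1, hn⟩ < π ⟨h, Nat.lt_of_succ_lt hn⟩) :
    eA π (π ⟨h + 1, hn⟩) < n - 1 - ((π ⟨h + 1, hn⟩ : Fin n) : ℕ) := by
  have h1 := eA_le (π * adjSwap n h) (π ⟨h + 1, hn⟩)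
  have h2 := eA_step_y hn π hyx
  omega

lemma eA_y_le : eA π (π ⟨h + 1, hn⟩) ≤ n - 2 - h := by
  set i' : Fin n := ⟨h + 1, hn⟩ with hi'def
  have hsub : (Finset.univ.filter fun k => π i' < k ∧ π⁻¹ (π i') < π⁻¹ k)
      ⊆ (Finset.Ioi i').image π := by
    intro k hk
    simp only [Finset.mem_filter, Finset.mem_univ, true_and, Equiv.Perm.inv_apply_self] at hk
    simp only [Finset.mem_image, Finset.mem_Ioi]
    exact ⟨π⁻¹ k, hk.2, Equiv.Perm.apply_inv_self π k⟩
  have h1 := Finset.card_le_card hsub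
  rw [Finset.card_image_of_injective _ π.injective, Fin.card_Ioi] at h1
  unfold eA
  simp only [hi'def] at h1 ⊢
  omega

lemma WV_step (φ : ℕ → ℝ) (hyx : π ⟨h + 1, hn⟩ < π ⟨h, Nat.lt_of_succ_lt hn⟩) :
    WV φ π = WV φ (π * adjSwap n h) + φ (n - 2 - eA π (π ⟨h + 1, hn⟩)) := by
  set y := π ⟨h + 1, hn⟩ with hydef
  unfold WV
  rw [← Finset.sum_erase_add _ _ (Finset.mem_univ y),
      ← Finset.sum_erase_add _ _ (Finset.mem_univ y)]
  have h1 : ∀ a ∈ Finset.univ.erase y,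
      (∑ r ∈ Finset.Ico (eA π a) (n - 1 - (a : ℕ)), φ (n - 2 - r))
      = ∑ r ∈ Finset.Ico (eA (π * adjSwap n h) a) (n - 1 - (a : ℕ)), φ (n - 2 - r) := by
    intro a ha
    rw [eA_step_ne hn π hyx a (Finset.mem_erase.1 ha).1]
  rw [Finset.sum_congr rfl h1]
  have h2 : eA π y < n - 1 - (y : ℕ) := eA_y_lt hn π hyx
  have h3 : (∑ r ∈ Finset.Ico (eA π y) (n - 1 - (y : ℕ)), φ (n - 2 - r))
      = φ (n - 2 - eA π y) + ∑ r ∈ Finset.Ico (eA π y + 1) (n - 1 - (y : ℕ)), φ (n - 2 - r) :=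
    Finset.sum_eq_sum_Ico_succ_bot h2 _
  rw [h3, eA_step_y hn π hyx]
  ring

lemma invN_step (hyx : π ⟨h + 1, hn⟩ < π ⟨h, Nat.lt_of_succ_lt hn⟩) :
    invN π = invN (π * adjSwap n h) + 1 := by
  have hy2 := eA_step_y hn π hyx
  have h2 := eA_y_lt hn π hyx
  unfold invN
  rw [← Finset.sum_erase_add _ _ (Finset.mem_univ (π ⟨h + 1, hn⟩)),
      ← Finset.sum_erase_add _ _ (Finset.mem_univ (π ⟨h + 1, hn⟩))]
  have h1 : ∀ a ∈ Finset.univ.erase (π ⟨h + 1, hn⟩),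
      (n - 1 - (a : ℕ) - eA π a) = (n - 1 - (a : ℕ) - eA (π * adjSwap n h) a) := by
    intro a ha
    rw [eA_step_ne hn π hyx a (Finset.mem_erase.1 ha).1]
  rw [Finset.sum_congr rfl h1]
  omega

end Step

lemma adjSwap_sq {n h : ℕ} : adjSwap n h * adjSwap n h = 1 := by
  unfold adjSwap
  split
  · exact Equiv.swap_mul_self _ _
  · simp

lemma WV_le_cost {n : ℕ} (φ : ℕ → ℝ) (hφ0 : ∀ i, i + 2 ≤ n → 0 ≤ φ i)
    (hdec : ∀ i j, j ≤ i → i + 2 ≤ n → φ i ≤ φ j) :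
    ∀ (l : List ℕ) (π : Equiv.Perm (Fin n)), (∀ i ∈ l, i + 1 < n) →
      π * (l.map (adjSwap n)).prod = 1 → WV φ π ≤ (l.map φ).sum := by
  intro l
  induction l with
  | nil =>
    intro π _ hπ
    simp only [List.map_nil, List.prod_nil, mul_one] at hπ
    rw [hπ, WV_one]
    simp
  | cons head tail ih =>
    intro π hl hπ
    have hn : head + 1 < n := hl head List.mem_cons_self
    have hπ' : (π * adjSwap n head) * ((tail.map (adjSwap n)).prod) = 1 := by
      rw [mul_assoc]
      simpa [List.map_cons, List.prod_cons, mul_assoc] using hπ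
    have ihtail := ih (π * adjSwap n head) (fun i hi => hl i (List.mem_cons_of_mem _ hi)) hπ'
    have hsum : ((head :: tail).map φ).sum = φ head + (tail.map φ).sum := by
      simp [List.map_cons, List.sum_cons]
    rw [hsum]
    have hne : π ⟨head + 1, hn⟩ ≠ π ⟨head, Nat.lt_of_succ_lt hn⟩ := by
      intro hc
      have := π.injective hc
      simp only [Fin.mk.injEq] at this
      omega
    rcases lt_or_gt_of_ne hne with hyx | hxy
    · -- sorting swap
      rw [WV_step hn π φ hyx]
      have he := eA_y_le hn π
      have harg : φ (n - 2 - eA π (π ⟨head + 1, hn⟩)) ≤ φ head := by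
        apply hdec _ _ (by omega) (by omega)
      linarith
    · -- anti-sorting swap: apply WV_step to π' = π * adjSwap n head
      have hback : (π * adjSwap n head) * adjSwap n head = π := by
        rw [mul_assoc, adjSwap_sq, mul_one]
      have hs : adjSwap n head = Equiv.swap (⟨head, Nat.lt_of_succ_lt hn⟩ : Fin n) ⟨head + 1, hn⟩ :=
        dif_pos hn
      have hyx' : (π * adjSwap n head) ⟨head + 1, hn⟩ < (π * adjSwap n head) ⟨head, Nat.lt_of_succ_lt hn⟩ := by
        rw [Equiv.Perm.mul_apply, Equiv.Perm.mul_apply, hs, Equiv.swap_apply_left,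
          Equiv.swap_apply_right]
        exact hxy
      have hstep := WV_step hn (π * adjSwap n head) φ hyx'
      rw [hback] at hstep
      have h0 : 0 ≤ φ (n - 2 - eA (π * adjSwap n head) ((π * adjSwap n head) ⟨head + 1, hn⟩)) :=
        hφ0 _ (by omega)
      have h0b : 0 ≤ φ head := hφ0 _ (by omega)
      linarith

lemma step_exists {n : ℕ} (π : Equiv.Perm (Fin n)) (hπ : π ≠ 1) :
    ∃ h : ℕ, ∃ hn : h + 1 < n, π ⟨h + 1, hn⟩ < π ⟨h, Nat.lt_of_succ_lt hn⟩ ∧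
      eA π (π ⟨h + 1, hn⟩) = n - 2 - h := by
  have hS : (Finset.univ.filter fun v : Fin n => π v ≠ v).Nonempty := by
    by_contra hempty
    rw [Finset.not_nonempty_iff_eq_empty, Finset.filter_eq_empty_iff] at hempty
    apply hπ
    apply Equiv.ext
    intro u
    have := hempty (Finset.mem_univ u)
    simpa using this
  set v := Finset.min' _ hS with hvdef
  have hv : π v ≠ v := (Finset.mem_filter.1 (Finset.min'_mem _ hS)).2
  have hmin : ∀ u : Fin n, u < v → π u = u := by
    intro u hu
    by_contra hne
    exact absurd (Finset.min'_le _ u (Finset.mem_filter.2 ⟨Finset.mem_univ _, hne⟩))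
      (not_le.2 hu)
  have hpv : π (π⁻¹ v) = v := Equiv.Perm.apply_inv_self π v
  have hvp : v < π⁻¹ v := by
    rcases lt_trichotomy (π⁻¹ v) v with h1 | h2 | h3
    · exfalso
      have h4 := hmin _ h1
      rw [hpv] at h4
      rw [← h4] at h1
      exact lt_irrefl _ h1
    · exfalso
      rw [h2] at hpv
      exact hv hpv
    · exact h3
  have hpn : ((π⁻¹ v : Fin n) : ℕ) < n := (π⁻¹ v).isLt
  obtain ⟨hp, hpeq⟩ : ∃ hp : ℕ, ((π⁻¹ v : Fin n) : ℕ) = hp + 1 := by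
    have : (v : ℕ) < ((π⁻¹ v : Fin n) : ℕ) := hvp
    exact ⟨((π⁻¹ v : Fin n) : ℕ) - 1, by omega⟩
  have hn : hp + 1 < n := by omega
  have hieq : (⟨hp + 1, hn⟩ : Fin n) = π⁻¹ v := Fin.ext (by rw [hpeq])
  have hvlt : (v : ℕ) < hp + 1 := by
    have : (v : ℕ) < ((π⁻¹ v : Fin n) : ℕ) := hvp
    omega
  refine ⟨hp, hn, ?_, ?_⟩
  · rw [hieq, hpv]
    have hxv : π ⟨hp, Nat.lt_of_succ_lt hn⟩ ≠ v := by
      intro hc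
      have h5 : (⟨hp, Nat.lt_of_succ_lt hn⟩ : Fin n) = π⁻¹ v := by
        apply π.injective; rw [hc, hpv]
      have := congrArg Fin.val h5
      simp only [Fin.val_mk] at this
      omega
    rcases lt_or_gt_of_ne hxv with hlt | hgt
    · exfalso
      have hx := hmin _ hlt
      have h5 : π ⟨hp, Nat.lt_of_succ_lt hn⟩ = ⟨hp, Nat.lt_of_succ_lt hn⟩ := by
        apply π.injective; rw [hx]
      have hval := congrArg Fin.val h5
      simp at hval
      have : ((π ⟨hp, Nat.lt_of_succ_lt hn⟩ : Fin n) : ℕ) < (v : ℕ) := hlt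
      omega
    · exact hgt
  · rw [hieq, hpv]
    have hset : (Finset.univ.filter fun k => v < k ∧ π⁻¹ v < π⁻¹ k)
        = (Finset.Ioi (π⁻¹ v)).image π := by
      ext k
      simp only [Finset.mem_filter, Finset.mem_univ, true_and, Finset.mem_image, Finset.mem_Ioi]
      constructor
      · rintro ⟨_, hk2⟩
        exact ⟨π⁻¹ k, hk2, Equiv.Perm.apply_inv_self π k⟩
      · rintro ⟨j, hj, rfl⟩
        have hj' : π⁻¹ v < π⁻¹ (π j) := by rw [Equiv.Perm.inv_apply_self]; exact hj
        refine ⟨?_, hj'⟩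
        have hne : π j ≠ v := by
          intro hc
          have h5 : j = π⁻¹ v := by rw [← hc, Equiv.Perm.inv_apply_self]
          rw [h5] at hj
          exact absurd hj (lt_irrefl _)
        rcases lt_or_gt_of_ne hne with hlt | hgt
        · exfalso
          have hji : π j = j := π.injective (hmin _ hlt)
          rw [hji] at hlt
          have h1 : (j : ℕ) < (v : ℕ) := hlt
          have h2 : ((π⁻¹ v : Fin n) : ℕ) < (j : ℕ) := hj
          have h3 : (v : ℕ) < ((π⁻¹ v : Fin n) : ℕ) := hvp
          omega
        · exact hgt
    unfold eA
    rw [hset, Finset.card_image_of_injective _ π.injective, Fin.card_Ioi]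
    omega

lemma exists_sorting {n : ℕ} (φ : ℕ → ℝ) (π : Equiv.Perm (Fin n)) :
    ∃ l : List ℕ, (∀ i ∈ l, i + 1 < n) ∧ π * (l.map (adjSwap n)).prod = 1 ∧
      (l.map φ).sum = WV φ π ∧ l.length = invN π := by
  suffices H : ∀ (N : ℕ) (π : Equiv.Perm (Fin n)), invN π ≤ N →
      ∃ l : List ℕ, (∀ i ∈ l, i + 1 < n) ∧ π * (l.map (adjSwap n)).prod = 1 ∧
        (l.map φ).sum = WV φ π ∧ l.length = invN π by
    exact H (invN π) π le_rfl
  intro N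
  induction N with
  | zero =>
    intro π hle
    by_cases hπ1 : π = 1
    · subst hπ1
      exact ⟨[], by simp, by simp, by simp [WV_one], by simp [invN_one]⟩
    · obtain ⟨h, hn, hyx, _⟩ := step_exists π hπ1
      have := invN_step hn π hyx
      omega
  | succ N ih =>
    intro π hle
    by_cases hπ1 : π = 1
    · subst hπ1
      exact ⟨[], by simp, by simp, by simp [WV_one], by simp [invN_one]⟩
    · obtain ⟨h, hn, hyx, he⟩ := step_exists π hπ1
      have hstep := invN_step hn π hyx
      obtain ⟨l', hl', hs', hsum', hlen'⟩ := ih (π * adjSwap n h) (by omega)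
      refine ⟨h :: l', ?_, ?_, ?_, ?_⟩
      · intro i hi
        rcases List.mem_cons.1 hi with rfl | hi'
        · exact hn
        · exact hl' i hi'
      · rw [List.map_cons, List.prod_cons, ← mul_assoc]
        exact hs'
      · rw [List.map_cons, List.sum_cons, hsum', WV_step hn π φ hyx, he]
        have harg : n - 2 - (n - 2 - h) = h := Nat.sub_sub_self (by omega)
        rw [harg]
        ring
      · simp [hstep, hlen']

lemma wKendall_eq_WV {n : ℕ} (φ : ℕ → ℝ) (hφ0 : ∀ i, i + 2 ≤ n → 0 ≤ φ i)
    (hdec : ∀ i j, j ≤ i → i + 2 ≤ n → φ i ≤ φ j) (π : Equiv.Perm (Fin n)) :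
    wKendall φ π 1 = WV φ π := by
  obtain ⟨l, hl, hs, hsum, _⟩ := exists_sorting φ π
  have hmem : WV φ π ∈ {w | ∃ l : List ℕ, (∀ i ∈ l, i + 1 < n) ∧
      (1 : Equiv.Perm (Fin n)) = π * (l.map (adjSwap n)).prod ∧ (l.map φ).sum = w} :=
    ⟨l, hl, hs.symm, hsum⟩
  have hlb : ∀ w ∈ {w | ∃ l : List ℕ, (∀ i ∈ l, i + 1 < n) ∧
      (1 : Equiv.Perm (Fin n)) = π * (l.map (adjSwap n)).prod ∧ (l.map φ).sum = w},
      WV φ π ≤ w := by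
    rintro w ⟨l', hl', hs', rfl⟩
    exact WV_le_cost φ hφ0 hdec l' π hl' hs'.symm
  exact le_antisymm (csInf_le ⟨WV φ π, hlb⟩ hmem) (le_csInf ⟨WV φ π, hmem⟩ hlb)

lemma sum_map_one (l : List ℕ) : (l.map fun _ => (1 : ℝ)).sum = l.length := by
  induction l with
  | nil => simp
  | cons a l ih => simp [ih, add_comm]

lemma WV_one_fn {n : ℕ} (π : Equiv.Perm (Fin n)) :
    WV (fun _ => (1 : ℝ)) π = (invN π : ℝ) := by
  unfold WV invN
  push_cast
  apply Finset.sum_congr rfl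
  intro a _
  rw [Finset.sum_const, Nat.card_Ico]
  simp

lemma kendall_eq_invN {n : ℕ} (π : Equiv.Perm (Fin n)) : kendall π 1 = invN π := by
  obtain ⟨l, hl, hs, _, hlen⟩ := exists_sorting (fun _ => (1 : ℝ)) π
  have hmem : invN π ∈ {s | ∃ l : List ℕ, (∀ i ∈ l, i + 1 < n) ∧
      (1 : Equiv.Perm (Fin n)) = π * (l.map (adjSwap n)).prod ∧ l.length = s} :=
    ⟨l, hl, hs.symm, hlen⟩
  have hlb : ∀ s ∈ {s | ∃ l : List ℕ, (∀ i ∈ l, i + 1 < n) ∧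
      (1 : Equiv.Perm (Fin n)) = π * (l.map (adjSwap n)).prod ∧ l.length = s},
      invN π ≤ s := by
    rintro s ⟨l', hl', hs', rfl⟩
    have h1 := WV_le_cost (fun _ => (1 : ℝ)) (fun _ _ => zero_le_one)
      (fun _ _ _ _ => le_rfl) l' π hl' hs'.symm
    rw [WV_one_fn, sum_map_one] at h1
    exact_mod_cast h1
  exact le_antisymm (Nat.sInf_le hmem) (le_csInf ⟨invN π, hmem⟩ hlb)
/-- rank-type statistic: number of elements `≥ a` placed after `u`. -/
def rnk {n : ℕ} (a : Fin n) (π : Equiv.Perm (Fin n)) (u : Fin n) : ℕ :=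
  (Finset.univ.filter fun k => a ≤ k ∧ π⁻¹ u < π⁻¹ k).card

lemma rnk_mono {n : ℕ} (a : Fin n) (π : Equiv.Perm (Fin n)) (u u' : Fin n)
    (hu' : a ≤ u') (hlt : π⁻¹ u < π⁻¹ u') : rnk a π u' < rnk a π u := by
  have hsub : insert u' (Finset.univ.filter fun k => a ≤ k ∧ π⁻¹ u' < π⁻¹ k)
      ⊆ (Finset.univ.filter fun k => a ≤ k ∧ π⁻¹ u < π⁻¹ k) := by
    intro k hk
    rcases Finset.mem_insert.1 hk with rfl | hk'
    · exact Finset.mem_filter.2 ⟨Finset.mem_univ _, hu', hlt⟩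
    · have := Finset.mem_filter.1 hk'
      exact Finset.mem_filter.2 ⟨Finset.mem_univ _, this.2.1, lt_trans hlt this.2.2⟩
  have hnot : u' ∉ (Finset.univ.filter fun k => a ≤ k ∧ π⁻¹ u' < π⁻¹ k) := by
    simp only [Finset.mem_filter, Finset.mem_univ, true_and, not_and]
    exact fun _ => lt_irrefl _
  have := Finset.card_le_card hsub
  rw [Finset.card_insert_of_notMem hnot] at this
  unfold rnk
  omega

lemma rnk_lt {n : ℕ} (a : Fin n) (π : Equiv.Perm (Fin n)) (u : Fin n) (hu : a ≤ u) :
    rnk a π u < n - (a : ℕ) := by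
  have hB : (Finset.univ.filter fun k : Fin n => a ≤ k) = Finset.Ici a := by
    ext k; simp [Finset.mem_Ici]
  have hsub : (Finset.univ.filter fun k => a ≤ k ∧ π⁻¹ u < π⁻¹ k)
      ⊆ (Finset.univ.filter fun k : Fin n => a ≤ k).erase u := by
    intro k hk
    have hk' := Finset.mem_filter.1 hk
    refine Finset.mem_erase.2 ⟨?_, Finset.mem_filter.2 ⟨Finset.mem_univ _, hk'.2.1⟩⟩
    intro hc
    rw [hc] at hk'
    exact lt_irrefl _ hk'.2.2
  have h1 := Finset.card_le_card hsub
  rw [Finset.card_erase_of_mem (by rw [hB]; exact Finset.mem_Ici.2 hu), hB, Fin.card_Ici] at h1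
  have h2 : 0 < n - (a : ℕ) := by have := a.isLt; omega
  unfold rnk
  omega

lemma fiber_sum {n : ℕ} (a : Fin n) (G : ℕ → ℝ) :
    ((n - (a : ℕ) : ℕ) : ℝ) * ∑ π : Equiv.Perm (Fin n), G (eA π a) =
      (n.factorial : ℝ) * ∑ e ∈ Finset.range (n - (a : ℕ)), G e := by
  classical
  have han : (a : ℕ) < n := a.isLt
  haveI : NeZero (n - (a : ℕ)) := ⟨by omega⟩
  let eqv : Fin (n - (a : ℕ)) ≃ {k : Fin n // a ≤ k} :=
    { toFun := fun j => ⟨⟨(a : ℕ) + (j : ℕ), by have := j.isLt; omega⟩, by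
        simp [Fin.le_def]⟩
      invFun := fun k => ⟨(k.1 : ℕ) - (a : ℕ), by have := k.1.isLt; omega⟩
      left_inv := fun j => by
        apply Fin.ext
        simp
      right_inv := fun k => by
        apply Subtype.ext
        apply Fin.ext
        have hk := k.2
        rw [Fin.le_def] at hk
        simp
        omega }
  let ε : Fin (n - (a : ℕ)) → Equiv.Perm (Fin n) :=
    fun t => Equiv.Perm.extendDomain (Equiv.addLeft t) eqv
  have hεsub : ∀ (t) (k : Fin n) (hk : a ≤ k),
      (ε t) k = (eqv ((Equiv.addLeft t) (eqv.symm ⟨k, hk⟩))).1 := by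
    intro t k hk
    exact Equiv.Perm.extendDomain_apply_subtype _ eqv hk
  have hB : ∀ (t) (k : Fin n), a ≤ k → a ≤ (ε t) k := by
    intro t k hk
    rw [hεsub t k hk]
    exact (eqv _).2
  have hBinv : ∀ (t) (k : Fin n), a ≤ k → a ≤ (ε t)⁻¹ k := by
    intro t k hk
    have h1 : (ε t)⁻¹ = Equiv.Perm.extendDomain (Equiv.addLeft t)⁻¹ eqv :=
      Equiv.Perm.extendDomain_inv _ eqv
    rw [h1, Equiv.Perm.extendDomain_apply_subtype _ eqv hk]
    exact (eqv _).2
  have hεa : ∀ t : Fin (n - (a : ℕ)),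
      (ε t) a = (⟨(a : ℕ) + (t : ℕ), by have := t.isLt; omega⟩ : Fin n) := by
    intro t
    rw [hεsub t a (le_refl a)]
    apply Fin.ext
    simp [eqv, Equiv.addLeft, Fin.add_def]
  have hcomp : ∀ (t) (π : Equiv.Perm (Fin n)) (j : Fin n),
      ((ε t)⁻¹ * π)⁻¹ j = π⁻¹ ((ε t) j) := by
    intro t π j
    rw [mul_inv_rev, inv_inv]
    rfl
  have hstep3 : ∀ (t) (π : Equiv.Perm (Fin n)),
      eA ((ε t)⁻¹ * π) a = rnk a π ((ε t) a) := by
    intro t π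
    unfold eA rnk
    apply Finset.card_bij (fun k _ => (ε t) k)
    · intro k hk
      have hk' := Finset.mem_filter.1 hk
      rw [hcomp t π a, hcomp t π k] at hk'
      exact Finset.mem_filter.2 ⟨Finset.mem_univ _,
        hB t k (le_of_lt hk'.2.1), hk'.2.2⟩
    · intro k _ k' _ hkk
      exact (ε t).injective hkk
    · intro k' hk'
      have hm := Finset.mem_filter.1 hk'
      refine ⟨(ε t)⁻¹ k', Finset.mem_filter.2 ⟨Finset.mem_univ _, ?_, ?_⟩,
        Equiv.Perm.apply_inv_self _ _⟩
      · have hle : a ≤ (ε t)⁻¹ k' := hBinv t k' hm.2.1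
        rcases eq_or_lt_of_le hle with heq | hlt
        · exfalso
          have hq : (ε t) a = k' := by rw [heq, Equiv.Perm.apply_inv_self]
          rw [hq] at hm
          exact lt_irrefl _ hm.2.2
        · exact hlt
      · rw [hcomp t π a, hcomp t π ((ε t)⁻¹ k'), Equiv.Perm.apply_inv_self]
        exact hm.2.2
  calc ((n - (a : ℕ) : ℕ) : ℝ) * ∑ π : Equiv.Perm (Fin n), G (eA π a)
      = ∑ _t : Fin (n - (a : ℕ)), ∑ π : Equiv.Perm (Fin n), G (eA π a) := by
        rw [Finset.sum_const, Finset.card_univ, Fintype.card_fin, nsmul_eq_mul]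
    _ = ∑ t : Fin (n - (a : ℕ)), ∑ π : Equiv.Perm (Fin n), G (rnk a π ((ε t) a)) := by
        refine Finset.sum_congr rfl fun t _ => ?_
        refine Fintype.sum_equiv (Equiv.mulLeft (ε t)) _ _ fun x => ?_
        rw [Equiv.coe_mulLeft, ← hstep3 t ((ε t) * x), inv_mul_cancel_left]
    _ = ∑ π : Equiv.Perm (Fin n), ∑ t : Fin (n - (a : ℕ)), G (rnk a π ((ε t) a)) :=
        Finset.sum_comm
    _ = ∑ _π : Equiv.Perm (Fin n), ∑ e ∈ Finset.range (n - (a : ℕ)), G e := by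
        refine Finset.sum_congr rfl fun π _ => ?_
        have h4 : ∑ t : Fin (n - (a : ℕ)), G (rnk a π ((ε t) a))
            = ∑ u ∈ Finset.univ.filter (fun k : Fin n => a ≤ k), G (rnk a π u) := by
          apply Finset.sum_nbij' (i := fun t : Fin (n - (a : ℕ)) =>
              (⟨(a : ℕ) + (t : ℕ), by have := t.isLt; omega⟩ : Fin n))
            (j := fun u : Fin n => (⟨(u : ℕ) - (a : ℕ), by have := u.isLt; omega⟩ :
              Fin (n - (a : ℕ))))
          · intro t _
            apply Finset.mem_filter.2
            refine ⟨Finset.mem_univ _, ?_⟩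
            rw [Fin.le_def]
            simp
          · intro u _
            exact Finset.mem_univ _
          · intro t _
            apply Fin.ext
            simp
          · intro u hu
            have := (Finset.mem_filter.1 hu).2
            rw [Fin.le_def] at this
            apply Fin.ext
            simp
            omega
          · intro t _
            rw [hεa t]
        rw [h4]
        have hinj : ∀ x ∈ Finset.univ.filter (fun k : Fin n => a ≤ k),
            ∀ y ∈ Finset.univ.filter (fun k : Fin n => a ≤ k),
            rnk a π x = rnk a π y → x = y := by
          intro x hx y hy heq
          by_contra hne
          have hne' : π⁻¹ x ≠ π⁻¹ y := fun hc => hne (by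
            have := π⁻¹.injective hc; exact this)
          rcases lt_or_gt_of_ne hne' with hlt | hgt
          · have := rnk_mono a π x y (Finset.mem_filter.1 hy).2 hlt
            omega
          · have := rnk_mono a π y x (Finset.mem_filter.1 hx).2 hgt
            omega
        have himgsub : (Finset.univ.filter (fun k : Fin n => a ≤ k)).image (rnk a π)
            ⊆ Finset.range (n - (a : ℕ)) := by
          intro e he
          obtain ⟨u, hu, rfl⟩ := Finset.mem_image.1 he
          exact Finset.mem_range.2 (rnk_lt a π u (Finset.mem_filter.1 hu).2)
        have hcardB : (Finset.univ.filter (fun k : Fin n => a ≤ k)).card = n - (a : ℕ) := by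
          have : (Finset.univ.filter fun k : Fin n => a ≤ k) = Finset.Ici a := by
            ext k; simp [Finset.mem_Ici]
          rw [this, Fin.card_Ici]
        have himg : (Finset.univ.filter (fun k : Fin n => a ≤ k)).image (rnk a π)
            = Finset.range (n - (a : ℕ)) := by
          apply Finset.eq_of_subset_of_card_le himgsub
          rw [Finset.card_range, Finset.card_image_of_injOn (fun x hx y hy => hinj x hx y hy),
            hcardB]
        rw [← himg, Finset.sum_image hinj]
    _ = (n.factorial : ℝ) * ∑ e ∈ Finset.range (n - (a : ℕ)), G e := by
        rw [Finset.sum_const, Finset.card_univ, Fintype.card_perm, Fintype.card_fin,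
          nsmul_eq_mul]
lemma inner_tri (m : ℕ) (f : ℕ → ℝ) :
    ∑ e ∈ Finset.range (m + 1), ∑ r ∈ Finset.Ico e m, f r
      = ∑ r ∈ Finset.range m, ((r : ℝ) + 1) * f r := by
  induction m with
  | zero => simp
  | succ m ih =>
    rw [Finset.sum_range_succ (f := fun e => ∑ r ∈ Finset.Ico e (m + 1), f r),
      Finset.Ico_self, Finset.sum_empty, add_zero]
    have h1 : ∀ e ∈ Finset.range (m + 1), ∑ r ∈ Finset.Ico e (m + 1), f r
        = (∑ r ∈ Finset.Ico e m, f r) + f m := by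
      intro e he
      rw [Finset.sum_Ico_succ_top (Finset.mem_range_succ_iff.1 he)]
    rw [Finset.sum_congr rfl h1, Finset.sum_add_distrib, ih, Finset.sum_const,
      Finset.card_range, Finset.sum_range_succ, nsmul_eq_mul]
    push_cast
    ring

lemma sum_swap_tri {n : ℕ} (g : ℕ → ℕ → ℝ) :
    ∑ l ∈ Finset.Icc 1 n, ∑ s ∈ Finset.Ioc (n - l) (n - 1), g l s
      = ∑ s ∈ Finset.Icc 1 (n - 1), ∑ l ∈ Finset.Ioc (n - s) n, g l s := by
  have h1 : ∀ l ∈ Finset.Icc 1 n, ∑ s ∈ Finset.Ioc (n - l) (n - 1), g l s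
      = ∑ s ∈ Finset.Icc 1 (n - 1), if n - l < s then g l s else 0 := by
    intro l _
    rw [← Finset.sum_filter]
    congr 1
    ext s
    simp only [Finset.mem_Ioc, Finset.mem_filter, Finset.mem_Icc]
    omega
  rw [Finset.sum_congr rfl h1, Finset.sum_comm]
  refine Finset.sum_congr rfl fun s hs => ?_
  rw [← Finset.sum_filter]
  congr 1
  ext l
  simp only [Finset.mem_Ioc, Finset.mem_filter, Finset.mem_Icc]
  have hs' := Finset.mem_Icc.1 hs
  omega

lemma harm_sub {n s : ℕ} (hs : s ≤ n) :
    harmonicNum n - harmonicNum (n - s) = ∑ l ∈ Finset.Ioc (n - s) n, (1 : ℝ) / l := by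
  have hIcc : ∀ k : ℕ, Finset.Icc 1 k = Finset.Ioc 0 k := by
    intro k; ext x; simp only [Finset.mem_Icc, Finset.mem_Ioc]; omega
  unfold harmonicNum
  rw [hIcc, hIcc]
  have h2 := Finset.sum_Ioc_consecutive (fun l => (1 : ℝ) / l) (Nat.zero_le (n - s))
    (Nat.sub_le n s)
  linarith

lemma sum_reflect {l n : ℕ} (hl : l ≤ n) (f : ℕ → ℝ) :
    ∑ s ∈ Finset.Ioc (n - l) (n - 1), f (n - s) = ∑ m ∈ Finset.Ico 1 l, f m := by
  refine Finset.sum_nbij' (fun s => n - s) (fun m => n - m) ?_ ?_ ?_ ?_ ?_ <;>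
    (intro x hx; simp only [Finset.mem_Ioc, Finset.mem_Ico] at *) <;>
    first
      | rfl
      | omega

lemma main_sum {n : ℕ} (φ : ℕ → ℝ) :
    ∑ π : Equiv.Perm (Fin n), WV φ π =
      (n.factorial : ℝ) * ∑ s ∈ Finset.Icc 1 (n - 1),
        φ (s - 1) * ((n : ℝ) - s) * (harmonicNum n - harmonicNum (n - s)) := by
  have key : ∀ a : Fin n, (∑ π : Equiv.Perm (Fin n),
      ∑ r ∈ Finset.Ico (eA π a) (n - 1 - (a : ℕ)), φ (n - 2 - r))
      = (n.factorial : ℝ) *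
        (∑ r ∈ Finset.range (n - 1 - (a : ℕ)), ((r : ℝ) + 1) * φ (n - 2 - r))
        / ((n - (a : ℕ) : ℕ) : ℝ) := by
    intro a
    have hpos : 0 < n - (a : ℕ) := by have := a.isLt; omega
    have hfib := fiber_sum a (fun e => ∑ r ∈ Finset.Ico e (n - 1 - (a : ℕ)), φ (n - 2 - r))
    have hrange : Finset.range (n - (a : ℕ)) = Finset.range ((n - 1 - (a : ℕ)) + 1) := by
      congr 1; have := a.isLt; omega
    rw [hrange, inner_tri (n - 1 - (a : ℕ)) (fun r => φ (n - 2 - r))] at hfib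
    have hc : ((n - (a : ℕ) : ℕ) : ℝ) ≠ 0 := by
      have : (0 : ℝ) < ((n - (a : ℕ) : ℕ) : ℝ) := by exact_mod_cast hpos
      linarith
    rw [eq_div_iff hc, mul_comm]
    exact hfib
  calc ∑ π : Equiv.Perm (Fin n), WV φ π
      = ∑ a : Fin n, ∑ π : Equiv.Perm (Fin n),
          ∑ r ∈ Finset.Ico (eA π a) (n - 1 - (a : ℕ)), φ (n - 2 - r) := by
        unfold WV; exact Finset.sum_comm
    _ = ∑ a : Fin n, (n.factorial : ℝ) *
          (∑ r ∈ Finset.range (n - 1 - (a : ℕ)), ((r : ℝ) + 1) * φ (n - 2 - r))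
          / ((n - (a : ℕ) : ℕ) : ℝ) :=
        Finset.sum_congr rfl fun a _ => key a
    _ = ∑ α ∈ Finset.range n, (n.factorial : ℝ) *
          (∑ r ∈ Finset.range (n - 1 - α), ((r : ℝ) + 1) * φ (n - 2 - r))
          / ((n - α : ℕ) : ℝ) :=
        Fin.sum_univ_eq_sum_range (fun α => (n.factorial : ℝ) *
          (∑ r ∈ Finset.range (n - 1 - α), ((r : ℝ) + 1) * φ (n - 2 - r))
          / ((n - α : ℕ) : ℝ)) n
    _ = ∑ l ∈ Finset.Icc 1 n, (n.factorial : ℝ) *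
          (∑ r ∈ Finset.range (l - 1), ((r : ℝ) + 1) * φ (n - 2 - r)) / (l : ℝ) := by
        refine Finset.sum_nbij' (fun α => n - α) (fun l => n - l) ?_ ?_ ?_ ?_ ?_
        · intro α hα; simp only [Finset.mem_range, Finset.mem_Icc] at *; omega
        · intro l hl; simp only [Finset.mem_range, Finset.mem_Icc] at *; omega
        · intro α hα; simp only [Finset.mem_range] at *; omega
        · intro l hl; simp only [Finset.mem_Icc] at *; omega
        · intro α hα
          simp only [Finset.mem_range] at hα
          have h1 : n - 1 - α = (n - α) - 1 := by omega
          rw [h1]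
    _ = ∑ l ∈ Finset.Icc 1 n, ∑ s ∈ Finset.Ioc (n - l) (n - 1),
          (n.factorial : ℝ) * (((n - s : ℕ) : ℝ) * φ (s - 1)) / (l : ℝ) := by
        refine Finset.sum_congr rfl fun l hl => ?_
        have hl' := Finset.mem_Icc.1 hl
        rw [Finset.mul_sum, Finset.sum_div]
        refine Finset.sum_nbij' (fun r => n - 1 - r) (fun s => n - 1 - s) ?_ ?_ ?_ ?_ ?_
        · intro r hr; simp only [Finset.mem_range, Finset.mem_Ioc] at *; omega
        · intro s hs; simp only [Finset.mem_range, Finset.mem_Ioc] at *; omega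
        · intro r hr; simp only [Finset.mem_range] at *; omega
        · intro s hs; simp only [Finset.mem_Ioc] at *; omega
        · intro r hr
          simp only [Finset.mem_range] at hr
          have h1 : n - (n - 1 - r) = r + 1 := by omega
          have h2 : (n - 1 - r) - 1 = n - 2 - r := by omega
          rw [h1, h2]
          push_cast
          ring
    _ = ∑ s ∈ Finset.Icc 1 (n - 1), ∑ l ∈ Finset.Ioc (n - s) n,
          (n.factorial : ℝ) * (((n - s : ℕ) : ℝ) * φ (s - 1)) / (l : ℝ) :=
        sum_swap_tri _
    _ = (n.factorial : ℝ) * ∑ s ∈ Finset.Icc 1 (n - 1),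
          φ (s - 1) * ((n : ℝ) - s) * (harmonicNum n - harmonicNum (n - s)) := by
        rw [Finset.mul_sum]
        refine Finset.sum_congr rfl fun s hs => ?_
        have hs' := Finset.mem_Icc.1 hs
        have hsn : s ≤ n := by omega
        rw [harm_sub hsn]
        have hcast : ((n - s : ℕ) : ℝ) = (n : ℝ) - s := by
          push_cast [Nat.cast_sub hsn]; ring
        rw [Finset.mul_sum, Finset.mul_sum]
        refine Finset.sum_congr rfl fun l _ => ?_
        rw [hcast]
        ring

lemma sum_Ico_id (l : ℕ) : ∑ m ∈ Finset.Ico 1 l, (m : ℝ) = (l : ℝ) * ((l : ℝ) - 1) / 2 := by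
  induction l with
  | zero => simp
  | succ l ih =>
    rcases Nat.eq_zero_or_pos l with rfl | hl
    · simp
    · rw [Finset.sum_Ico_succ_top (by omega), ih]
      push_cast
      ring

lemma sum_Ico_sq (l : ℕ) :
    ∑ m ∈ Finset.Ico 1 l, (m : ℝ) * (m : ℝ)
      = (l : ℝ) * ((l : ℝ) - 1) * (2 * (l : ℝ) - 1) / 6 := by
  induction l with
  | zero => simp
  | succ l ih =>
    rcases Nat.eq_zero_or_pos l with rfl | hl
    · simp
    · rw [Finset.sum_Ico_succ_top (by omega), ih]
      push_cast
      ring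

lemma sum_Icc_lin (n : ℕ) :
    ∑ l ∈ Finset.Icc 1 n, ((l : ℝ) - 1) / 2 = (n : ℝ) * ((n : ℝ) - 1) / 4 := by
  induction n with
  | zero => simp
  | succ n ih =>
    rw [Finset.sum_Icc_succ_top (by omega), ih]
    push_cast
    ring

lemma sum_Icc_quad (n : ℕ) :
    ∑ l ∈ Finset.Icc 1 n, ((l : ℝ) - 1) * (2 * (l : ℝ) - 1) / 6
      = (n : ℝ) * ((n : ℝ) - 1) / 4 + (n : ℝ) * ((n : ℝ) - 1) * ((n : ℝ) - 2) / 9 := by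
  induction n with
  | zero => simp
  | succ n ih =>
    rw [Finset.sum_Icc_succ_top (by omega), ih]
    push_cast
    ring

lemma harm_id_one (n : ℕ) :
    ∑ s ∈ Finset.Icc 1 (n - 1), ((n : ℝ) - s) * (harmonicNum n - harmonicNum (n - s))
      = (n : ℝ) * ((n : ℝ) - 1) / 4 := by
  have h1 : ∀ s ∈ Finset.Icc 1 (n - 1), ((n : ℝ) - s) * (harmonicNum n - harmonicNum (n - s))
      = ∑ l ∈ Finset.Ioc (n - s) n, ((n - s : ℕ) : ℝ) / l := by
    intro s hs
    have hs' := Finset.mem_Icc.1 hs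
    have hsn : s ≤ n := by omega
    rw [harm_sub hsn, Finset.mul_sum]
    refine Finset.sum_congr rfl fun l _ => ?_
    have hcast : ((n - s : ℕ) : ℝ) = (n : ℝ) - s := by push_cast [Nat.cast_sub hsn]; ring
    rw [hcast]
    ring
  rw [Finset.sum_congr rfl h1, ← sum_swap_tri (fun l s => ((n - s : ℕ) : ℝ) / l)]
  have h2 : ∀ l ∈ Finset.Icc 1 n, ∑ s ∈ Finset.Ioc (n - l) (n - 1), ((n - s : ℕ) : ℝ) / l
      = ((l : ℝ) - 1) / 2 := by
    intro l hl
    have hl' := Finset.mem_Icc.1 hl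
    have hr := sum_reflect hl'.2 (fun m => ((m : ℕ) : ℝ) / (l : ℝ))
    rw [hr, ← Finset.sum_div, sum_Ico_id]
    have hl0 : (l : ℝ) ≠ 0 := by
      have : (0 : ℝ) < (l : ℝ) := by exact_mod_cast hl'.1
      linarith
    field_simp
  rw [Finset.sum_congr rfl h2, sum_Icc_lin]

lemma harm_id_two (n : ℕ) :
    ∑ s ∈ Finset.Icc 1 (n - 1),
        ((n : ℝ) - s) * ((n : ℝ) - s) * (harmonicNum n - harmonicNum (n - s))
      = (n : ℝ) * ((n : ℝ) - 1) / 4 + (n : ℝ) * ((n : ℝ) - 1) * ((n : ℝ) - 2) / 9 := by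
  have h1 : ∀ s ∈ Finset.Icc 1 (n - 1),
      ((n : ℝ) - s) * ((n : ℝ) - s) * (harmonicNum n - harmonicNum (n - s))
      = ∑ l ∈ Finset.Ioc (n - s) n, ((n - s : ℕ) : ℝ) * ((n - s : ℕ) : ℝ) / l := by
    intro s hs
    have hs' := Finset.mem_Icc.1 hs
    have hsn : s ≤ n := by omega
    rw [harm_sub hsn, Finset.mul_sum]
    refine Finset.sum_congr rfl fun l _ => ?_
    have hcast : ((n - s : ℕ) : ℝ) = (n : ℝ) - s := by push_cast [Nat.cast_sub hsn]; ring
    rw [hcast]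
    ring
  rw [Finset.sum_congr rfl h1,
    ← sum_swap_tri (fun l s => ((n - s : ℕ) : ℝ) * ((n - s : ℕ) : ℝ) / l)]
  have h2 : ∀ l ∈ Finset.Icc 1 n,
      ∑ s ∈ Finset.Ioc (n - l) (n - 1), ((n - s : ℕ) : ℝ) * ((n - s : ℕ) : ℝ) / l
      = ((l : ℝ) - 1) * (2 * (l : ℝ) - 1) / 6 := by
    intro l hl
    have hl' := Finset.mem_Icc.1 hl
    have hr := sum_reflect hl'.2 (fun m => ((m : ℕ) : ℝ) * ((m : ℕ) : ℝ) / (l : ℝ))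
    rw [hr, ← Finset.sum_div, sum_Ico_sq]
    have hl0 : (l : ℝ) ≠ 0 := by
      have : (0 : ℝ) < (l : ℝ) := by exact_mod_cast hl'.1
      linarith
    field_simp
  rw [Finset.sum_congr rfl h2, sum_Icc_quad]

lemma cast_choose_three (n : ℕ) :
    ((n.choose 3 : ℕ) : ℝ) = (n : ℝ) * ((n : ℝ) - 1) * ((n : ℝ) - 2) / 6 := by
  induction n with
  | zero => simp
  | succ n ih =>
    have h1 : (n + 1).choose 3 = n.choose 2 + n.choose 3 := Nat.choose_succ_succ n 2
    rw [h1]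
    push_cast [Nat.cast_choose_two, ih]
    ring

theorem stmt19 (n : ℕ) (φ : ℕ → ℝ)
    (hφ0 : ∀ i, 0 ≤ φ i) (hdec : ∀ i j, j ≤ i → φ i ≤ φ j) :
    (∑ π : Equiv.Perm (Fin n), wKendall φ π 1) / (n.factorial : ℝ) =
      ∑ s ∈ Finset.Icc 1 (n - 1),
        φ (s - 1) * ((n : ℝ) - s) * (harmonicNum n - harmonicNum (n - s)) ∧
    (∑ π : Equiv.Perm (Fin n), ((kendall π 1 : ℕ) : ℝ)) / (n.factorial : ℝ) =
      (1 / 2) * (n.choose 2 : ℝ) ∧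
    (∑ π : Equiv.Perm (Fin n), wKendall (fun h => (n : ℝ) - h - 1) π 1) / (n.factorial : ℝ) =
      (1 / 2) * (n.choose 2 : ℝ) + (2 / 3) * (n.choose 3 : ℝ) := by
  have hfacne : (n.factorial : ℝ) ≠ 0 := by
    have : (0 : ℝ) < (n.factorial : ℝ) := by exact_mod_cast n.factorial_pos
    linarith
  have hdivide : ∀ E : ℝ, ((n.factorial : ℝ) * E) / (n.factorial : ℝ) = E := by
    intro E
    rw [mul_comm, mul_div_assoc, div_self hfacne, mul_one]
  refine ⟨?_, ?_, ?_⟩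
  · have h1 : ∀ π : Equiv.Perm (Fin n), wKendall φ π 1 = WV φ π :=
      wKendall_eq_WV φ (fun i _ => hφ0 i) (fun i j hji _ => hdec i j hji)
    rw [Finset.sum_congr rfl (fun π _ => h1 π), main_sum, hdivide]
  · have h1 : ∀ π : Equiv.Perm (Fin n), ((kendall π 1 : ℕ) : ℝ) = WV (fun _ => (1 : ℝ)) π := by
      intro π
      rw [kendall_eq_invN, WV_one_fn]
    rw [Finset.sum_congr rfl (fun π _ => h1 π), main_sum, hdivide]
    have h2 : ∀ s ∈ Finset.Icc 1 (n - 1),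
        (fun _ => (1 : ℝ)) (s - 1) * ((n : ℝ) - s) * (harmonicNum n - harmonicNum (n - s))
        = ((n : ℝ) - s) * (harmonicNum n - harmonicNum (n - s)) := by
      intro s _; simp
    rw [Finset.sum_congr rfl h2, harm_id_one, Nat.cast_choose_two]
    ring
  · have hφ3 : ∀ i, i + 2 ≤ n → 0 ≤ (fun h : ℕ => (n : ℝ) - h - 1) i := by
      intro i hi
      simp only
      have : ((i : ℕ) : ℝ) + 2 ≤ (n : ℝ) := by exact_mod_cast hi
      linarith
    have hdec3 : ∀ i j, j ≤ i → i + 2 ≤ n →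
        (fun h : ℕ => (n : ℝ) - h - 1) i ≤ (fun h : ℕ => (n : ℝ) - h - 1) j := by
      intro i j hji _
      simp only
      have : ((j : ℕ) : ℝ) ≤ ((i : ℕ) : ℝ) := by exact_mod_cast hji
      linarith
    have h1 : ∀ π : Equiv.Perm (Fin n),
        wKendall (fun h : ℕ => (n : ℝ) - h - 1) π 1 = WV (fun h : ℕ => (n : ℝ) - h - 1) π :=
      wKendall_eq_WV _ hφ3 hdec3
    rw [Finset.sum_congr rfl (fun π _ => h1 π), main_sum, hdivide]
    have h2 : ∑ s ∈ Finset.Icc 1 (n - 1),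
        (fun h : ℕ => (n : ℝ) - h - 1) (s - 1) * ((n : ℝ) - s) *
          (harmonicNum n - harmonicNum (n - s))
        = ∑ s ∈ Finset.Icc 1 (n - 1),
          ((n : ℝ) - s) * ((n : ℝ) - s) * (harmonicNum n - harmonicNum (n - s)) := by
      refine Finset.sum_congr rfl fun s hs => ?_
      have hs' := Finset.mem_Icc.1 hs
      have hcast : ((s - 1 : ℕ) : ℝ) = (s : ℝ) - 1 := by
        push_cast [Nat.cast_sub hs'.1]; ring
      simp only [hcast]
      ring
    rw [h2, harm_id_two, Nat.cast_choose_two, cast_choose_three]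
    ring
end
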